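/- arXiv:2107.03775 — 7 statements merged into one kernel-verified Lean document; each statement's English description precedes it below -/
import Mathlib

section
/- For every real number z and every natural number l ≥ 1, the function R_l(z) = ∑_{m=0}^∞ (iz)^m / (m+l)! satisfies |R_l(z)| ≤ 1/l!. -/
open MeasureTheory Complex intervalIntegral

/-- `R l z = ∑_{m=0}^∞ (iz)^m / (m+l)!`. -/
noncomputable def R (l : ℕ) (z : ℝ) : ℂ :=
  ∑' m : ℕ, (Complex.I * z) ^ m / ((m + l).factorial : ℂ)

lemma prod_aux (m : ℕ) : ∀ k : ℕ,
    (m.factorial : ℂ) * ∏ j ∈ Finset.range k, ((m : ℂ) + 1 + j) = ((m + k).factorial : ℂ)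
  | 0 => by simp
  | k + 1 => by
    rw [Finset.prod_range_succ, ← mul_assoc, prod_aux m k,
      show m + (k + 1) = (m + k) + 1 from rfl, Nat.factorial_succ]
    push_cast
    ring

lemma beta_nat (m n : ℕ) :
    (∫ t in (0:ℝ)..1, (t : ℂ) ^ m * ((1 : ℂ) - t) ^ n)
      = (m.factorial : ℂ) * n.factorial / ((m + n + 1).factorial : ℂ) := by
  have hu : 0 < Complex.re ((m : ℂ) + 1) := by
    simp only [Complex.add_re, Complex.natCast_re, Complex.one_re]
    positivity
  have h := Complex.betaIntegral_eval_nat_add_one_right hu n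
  rw [Complex.betaIntegral] at h
  simp only [add_sub_cancel_right, Complex.cpow_natCast] at h
  rw [h]
  have hp := prod_aux m (n + 1)
  have hm : (m.factorial : ℂ) ≠ 0 := Nat.cast_ne_zero.2 m.factorial_ne_zero
  have hmn1 : ((m + n + 1).factorial : ℂ) ≠ 0 := Nat.cast_ne_zero.2 (Nat.factorial_ne_zero _)
  have hP : (∏ j ∈ Finset.range (n + 1), ((m : ℂ) + 1 + j)) ≠ 0 := by
    intro h0
    rw [h0, mul_zero] at hp
    rw [show m + (n + 1) = m + n + 1 from rfl] at hp
    exact hmn1 hp.symm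
  rw [show m + n + 1 = m + (n + 1) from rfl, ← hp]
  field_simp

/-- For every real `z` and natural `l ≥ 1`, `|R_l(z)| ≤ 1/l!`. -/
theorem abs_R_le (z : ℝ) (l : ℕ) (hl : 1 ≤ l) :
    ‖R l z‖ ≤ 1 / (l.factorial : ℝ) := by
  obtain ⟨n, rfl⟩ : ∃ n, l = n + 1 := ⟨l - 1, (Nat.succ_pred_eq_of_pos hl).symm⟩
  set F : ℕ → ℝ → ℂ := fun m t =>
    (Complex.I * z) ^ m / ((m.factorial : ℂ) * (n.factorial : ℂ)) *
      ((t : ℂ) ^ m * ((1 : ℂ) - t) ^ n) with hF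
  set g : ℝ → ℂ := fun t =>
    Complex.exp (Complex.I * z * t) * ((1 : ℂ) - t) ^ n / (n.factorial : ℂ) with hg
  have h01 : (0:ℝ) ≤ 1 := by norm_num
  -- interchange of sum and integral
  have key : HasSum (fun m => ∫ t in (0:ℝ)..1, F m t) (∫ t in (0:ℝ)..1, g t) := by
    apply intervalIntegral.hasSum_integral_of_dominated_convergence
      (bound := fun m _ => |z| ^ m / m.factorial / n.factorial)
    · intro m
      apply Continuous.aestronglyMeasurable
      fun_prop
    · intro m
      refine ae_of_all _ fun t ht => ?_
      rw [Set.uIoc_of_le h01] at ht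
      have ht1 : |t| ≤ 1 := abs_le.2 ⟨by linarith [ht.1], ht.2⟩
      have ht2 : |1 - t| ≤ 1 := abs_le.2 ⟨by linarith [ht.2], by linarith [ht.1]⟩
      have hnorm : ‖F m t‖ = |z| ^ m / (m.factorial * n.factorial) * (|t| ^ m * |1 - t| ^ n) := by
        have e1 : ((1 : ℂ) - t) = ((1 - t : ℝ) : ℂ) := by push_cast; ring
        simp only [hF, e1, norm_mul, norm_div, norm_pow, Complex.norm_I,
          Complex.norm_real, Real.norm_eq_abs, Complex.norm_natCast, one_mul]
      rw [hnorm, div_div]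
      have hnn : (0:ℝ) ≤ |z| ^ m / (↑m.factorial * ↑n.factorial) := by positivity
      calc |z| ^ m / (↑m.factorial * ↑n.factorial) * (|t| ^ m * |1 - t| ^ n)
          ≤ |z| ^ m / (↑m.factorial * ↑n.factorial) * 1 := by
            apply mul_le_mul_of_nonneg_left _ hnn
            exact mul_le_one₀ (pow_le_one₀ (abs_nonneg _) ht1)
              (pow_nonneg (abs_nonneg _) _) (pow_le_one₀ (abs_nonneg _) ht2)
        _ = |z| ^ m / (↑m.factorial * ↑n.factorial) := mul_one _
    · refine ae_of_all _ fun t _ => ?_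
      exact (Real.summable_pow_div_factorial |z|).div_const _
    · exact intervalIntegrable_const
    · refine ae_of_all _ fun t _ => ?_
      have h1 := NormedSpace.expSeries_div_hasSum_exp (Complex.I * z * t)
      rw [← Complex.exp_eq_exp_ℂ] at h1
      have h2 := h1.mul_right (((1 : ℂ) - t) ^ n / (n.factorial : ℂ))
      convert h2 using 1
      · rfl
      · funext m
        simp only [hF]
        rw [mul_pow]
        ring
      · simp only [hg]
        ring
  have hFval : ∀ m : ℕ, (∫ t in (0:ℝ)..1, F m t)
      = (Complex.I * z) ^ m / (((m + (n + 1)).factorial : ℕ) : ℂ) := by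
    intro m
    simp only [hF]
    rw [intervalIntegral.integral_const_mul, beta_nat m n,
      show m + (n + 1) = m + n + 1 from rfl]
    have hm : (m.factorial : ℂ) ≠ 0 := Nat.cast_ne_zero.2 m.factorial_ne_zero
    have hn : (n.factorial : ℂ) ≠ 0 := Nat.cast_ne_zero.2 n.factorial_ne_zero
    have hmn1 : ((m + n + 1).factorial : ℂ) ≠ 0 := Nat.cast_ne_zero.2 (Nat.factorial_ne_zero _)
    field_simp
  simp only [hFval] at key
  have hR : R (n + 1) z = ∫ t in (0:ℝ)..1, g t := by
    rw [R]
    exact key.tsum_eq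
  rw [hR]
  have hgnorm : ∀ t ∈ Set.uIcc (0:ℝ) 1, ‖g t‖ = (1 - t) ^ n / n.factorial := by
    intro t ht
    rw [Set.uIcc_of_le h01] at ht
    have e0 : Complex.I * (z : ℂ) * (t : ℂ) = ((z * t : ℝ) : ℂ) * Complex.I := by
      push_cast; ring
    have e1 : ((1 : ℂ) - t) = ((1 - t : ℝ) : ℂ) := by push_cast; ring
    simp only [hg, e0, e1, norm_mul, norm_div, norm_pow,
      Complex.norm_exp_ofReal_mul_I, Complex.norm_real, Real.norm_eq_abs, Complex.norm_natCast, one_mul,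
      _root_.abs_of_nonneg (by linarith [ht.2] : (0:ℝ) ≤ 1 - t)]
  have hval : (∫ t in (0:ℝ)..1, (1 - t) ^ n / (n.factorial : ℝ)) = 1 / ((n+1).factorial : ℝ) := by
    rw [intervalIntegral.integral_div]
    rw [show (fun t : ℝ => (1 - t) ^ n) = fun t : ℝ => (fun s : ℝ => s ^ n) (1 - t) from rfl]
    rw [intervalIntegral.integral_comp_sub_left (fun s : ℝ => s ^ n) 1]
    rw [integral_pow]
    rw [Nat.factorial_succ]
    push_cast
    norm_num
    rw [div_eq_mul_inv, mul_comm]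
  calc ‖∫ t in (0:ℝ)..1, g t‖
      ≤ ∫ t in (0:ℝ)..1, ‖g t‖ := by
        simpa using intervalIntegral.norm_integral_le_integral_norm
          (f := g) (μ := volume) h01
    _ = ∫ t in (0:ℝ)..1, (1 - t) ^ n / (n.factorial : ℝ) :=
        intervalIntegral.integral_congr hgnorm
    _ = 1 / ((n+1).factorial : ℝ) := hval
end

section
/- Let φ be the characteristic function of a real random variable, and suppose there exist functions a, b : ℝ → ℂ with t ↦ t²·a(t) and t ↦ t²·b(t) continuous, constants A > 0 and B ≥ 0 with ‖a‖_∞ ≤ A and ‖b‖_∞ ≤ B, such that φ'(t) + t·φ(t) = t²·(a(t)·φ(t) + b(t)) for all t ∈ ℝ. Then for all t ≥ 0 with t ≤ 1/(2A), |φ(t) − exp(−t²/2)| ≤ (A/3)·t³·exp(−t²/4) + 2Bt. -/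
open MeasureTheory

set_option maxHeartbeats 1000000 in
/-- Tikhomirov ODE lemma: if the characteristic function `φ` of a real random
variable (law `μ`) satisfies `φ'(t) + t·φ(t) = t²·(a(t)·φ(t) + b(t))` with
`‖a‖_∞ ≤ A`, `‖b‖_∞ ≤ B`, and `t ↦ t²a(t)`, `t ↦ t²b(t)` continuous, then for
`0 ≤ t ≤ 1/(2A)` we have `|φ(t) − e^{−t²/2}| ≤ (A/3)t³e^{−t²/4} + 2Bt`. -/
theorem tikhomirov_ode_bound
    (μ : Measure ℝ) [IsProbabilityMeasure μ]
    (φ φ' a b : ℝ → ℂ) (A B : ℝ) (hA : 0 < A) (hB : 0 ≤ B)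
    (hφ : ∀ t : ℝ, φ t = ∫ x, Complex.exp (Complex.I * t * x) ∂μ)
    (hderiv : ∀ t : ℝ, HasDerivAt φ (φ' t) t)
    (hconta : Continuous fun t : ℝ => (t : ℂ) ^ 2 * a t)
    (hcontb : Continuous fun t : ℝ => (t : ℂ) ^ 2 * b t)
    (hode : ∀ t : ℝ, φ' t + t * φ t = (t : ℂ) ^ 2 * (a t * φ t + b t))
    (ha : ∀ t : ℝ, ‖a t‖ ≤ A)
    (hb : ∀ t : ℝ, ‖b t‖ ≤ B) :
    ∀ t : ℝ, 0 ≤ t → t ≤ 1 / (2 * A) →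
      ‖φ t - Real.exp (-(t ^ 2) / 2)‖ ≤
        A / 3 * t ^ 3 * Real.exp (-(t ^ 2) / 4) + 2 * B * t := by
  -- setup
  set bnd : ℝ := 1 / (2 * A) with hbnd
  have hbpos : 0 < bnd := by positivity
  -- auxiliary functions
  set e2 : ℝ → ℂ := fun t => Complex.exp ((t : ℂ) ^ 2 / 2) with he2
  set f : ℝ → ℂ := fun t => φ t * e2 t - 1 with hf
  set F' : ℝ → ℂ := fun t => (t : ℂ) ^ 2 * (a t * φ t + b t) * e2 t with hF'
  -- derivative of f
  have hfderiv : ∀ t : ℝ, HasDerivAt f (F' t) t := by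
    intro t
    have h1 : HasDerivAt (fun t : ℝ => ((t ^ 2 / 2 : ℝ) : ℂ)) ((t : ℂ)) t := by
      have := ((hasDerivAt_pow 2 t).div_const 2).ofReal_comp
      convert this using 1
      push_cast
      ring
    have h1' : HasDerivAt (fun t : ℝ => ((t : ℂ) ^ 2 / 2)) ((t : ℂ)) t := by
      convert h1 using 2 with s
      push_cast
      ring
    have h2 : HasDerivAt e2 (e2 t * t) t := h1'.cexp
    have h3 : HasDerivAt (fun t => φ t * e2 t) (φ' t * e2 t + φ t * (e2 t * t)) t :=
      (hderiv t).mul h2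
    have h4 := h3.sub_const 1
    refine h4.congr_deriv (Eq.symm ?_)
    have := hode t
    rw [hF']
    calc (t : ℂ) ^ 2 * (a t * φ t + b t) * e2 t = (φ' t + t * φ t) * e2 t := by rw [← this]
      _ = φ' t * e2 t + φ t * (e2 t * t) := by ring
  -- |φ| ≤ 1
  have hφ1 : ∀ t : ℝ, ‖φ t‖ ≤ 1 := by
    intro t
    rw [hφ t]
    have := norm_integral_le_of_norm_le_const (μ := μ)
      (f := fun x : ℝ => Complex.exp (Complex.I * t * x)) (C := 1) ?_
    · simpa using this
    · filter_upwards with x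
      rw [Complex.norm_exp]
      simp
  -- norm of e2
  have he2norm : ∀ t : ℝ, ‖e2 t‖ = Real.exp (t ^ 2 / 2) := by
    intro t
    have hcast : ((t : ℂ) ^ 2 / 2) = ((t ^ 2 / 2 : ℝ) : ℂ) := by push_cast; ring
    simp only [he2, hcast, Complex.norm_exp, Complex.ofReal_re]
  -- norm bound for F'
  have hF'bound : ∀ t : ℝ, ‖F' t‖ ≤ A * t ^ 2 * (‖f t‖ + 1) + B * t ^ 2 * Real.exp (t ^ 2 / 2) := by
    intro t
    have hfe : ‖φ t‖ * Real.exp (t ^ 2 / 2) ≤ ‖f t‖ + 1 := by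
      have h0 : ‖φ t * e2 t‖ ≤ ‖f t‖ + 1 := by
        have he : φ t * e2 t = f t + 1 := by simp only [hf]; ring
        rw [he]
        simpa using norm_add_le (f t) (1 : ℂ)
      rwa [norm_mul, he2norm] at h0
    have hnt2 : ‖((t : ℂ) ^ 2)‖ = t ^ 2 := by
      rw [← Complex.ofReal_pow, Complex.norm_real, Real.norm_eq_abs, abs_of_nonneg (sq_nonneg t)]
    have h1 : ‖F' t‖ = t ^ 2 * ‖a t * φ t + b t‖ * Real.exp (t ^ 2 / 2) := by
      simp only [hF', norm_mul, he2norm, hnt2]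
    rw [h1]
    have h2 : ‖a t * φ t + b t‖ ≤ A * ‖φ t‖ + B := by
      calc ‖a t * φ t + b t‖ ≤ ‖a t * φ t‖ + ‖b t‖ := norm_add_le _ _
        _ = ‖a t‖ * ‖φ t‖ + ‖b t‖ := by rw [norm_mul]
        _ ≤ A * ‖φ t‖ + B := by
            gcongr <;> first
              | exact norm_nonneg _
              | exact ha t
              | exact hb t
    calc t ^ 2 * ‖a t * φ t + b t‖ * Real.exp (t ^ 2 / 2)
        ≤ t ^ 2 * (A * ‖φ t‖ + B) * Real.exp (t ^ 2 / 2) := by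
          gcongr
      _ = A * t ^ 2 * (‖φ t‖ * Real.exp (t ^ 2 / 2)) + B * t ^ 2 * Real.exp (t ^ 2 / 2) := by ring
      _ ≤ A * t ^ 2 * (‖f t‖ + 1) + B * t ^ 2 * Real.exp (t ^ 2 / 2) := by
          gcongr
  -- the comparison function
  set C : ℝ → ℝ := fun t => A / 3 * t ^ 3 * Real.exp (t ^ 2 / 4) + 2 * B * t * Real.exp (t ^ 2 / 2)
    with hC
  set C' : ℝ → ℝ := fun t => A * t ^ 2 * Real.exp (t ^ 2 / 4) + A / 6 * t ^ 4 * Real.exp (t ^ 2 / 4)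
    + 2 * B * Real.exp (t ^ 2 / 2) + 2 * B * t ^ 2 * Real.exp (t ^ 2 / 2) with hC'
  have hCderiv : ∀ t : ℝ, HasDerivAt C (C' t) t := by
    intro t
    have hq4 : HasDerivAt (fun t : ℝ => t ^ 2 / 4) (t / 2) t := by
      have := (hasDerivAt_pow 2 t).div_const 4
      exact this.congr_deriv (by ring)
    have hq2 : HasDerivAt (fun t : ℝ => t ^ 2 / 2) t t := by
      have := (hasDerivAt_pow 2 t).div_const 2
      exact this.congr_deriv (by ring)
    have he4 : HasDerivAt (fun t : ℝ => Real.exp (t ^ 2 / 4)) (Real.exp (t ^ 2 / 4) * (t / 2)) t :=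
      hq4.exp
    have he2' : HasDerivAt (fun t : ℝ => Real.exp (t ^ 2 / 2)) (Real.exp (t ^ 2 / 2) * t) t :=
      hq2.exp
    have hp3 : HasDerivAt (fun t : ℝ => A / 3 * t ^ 3) (A * t ^ 2) t := by
      have := (hasDerivAt_pow 3 t).const_mul (A / 3)
      exact this.congr_deriv (by push_cast; ring)
    have hp1 : HasDerivAt (fun t : ℝ => 2 * B * t) (2 * B) t := by
      simpa using (hasDerivAt_id t).const_mul (2 * B)
    have := (hp3.mul he4).add (hp1.mul he2')
    refine this.congr_deriv ?_
    rw [hC']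
    ring
  -- the key differential inequality, with an ε-margin
  set K : ℝ := A * bnd ^ 2 + 1 with hK
  have hKpos : 0 < K := by positivity
  have key : ∀ ε : ℝ, 0 < ε → ∀ t : ℝ, t ∈ Set.Icc (0 : ℝ) bnd →
      ‖f t‖ ≤ C t + ε * Real.exp (K * t) := by
    intro ε hε
    have hBε : ∀ x : ℝ, HasDerivAt (fun t => C t + ε * Real.exp (K * t))
        (C' x + ε * (K * Real.exp (K * x))) x := by
      intro x
      have h1 : HasDerivAt (fun t : ℝ => Real.exp (K * t)) (Real.exp (K * x) * K) x := by
        have : HasDerivAt (fun t : ℝ => K * t) K x := by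
          simpa using (hasDerivAt_id x).const_mul K
        exact this.exp
      have := (hCderiv x).add ((h1.const_mul ε))
      refine this.congr_deriv ?_
      ring
    apply image_norm_le_of_norm_deriv_right_lt_deriv_boundary
      (f := f) (f' := F')
      (fun x _ => ((hfderiv x).continuousAt.continuousWithinAt))
      (fun x _ => (hfderiv x).hasDerivWithinAt)
      ?_ hBε ?_
    · -- at zero
      have hφ0 : φ 0 = 1 := by
        rw [hφ 0]
        simp
      have : f 0 = 0 := by
        simp only [hf, hφ0, he2]
        norm_num
      rw [this]
      simp only [norm_zero, hC]
      positivity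
    · intro x hx hfx
      obtain ⟨hx0, hxb⟩ := hx
      have hAx : A * x ≤ 1 / 2 := by
        rw [hbnd, lt_div_iff₀ (by positivity)] at hxb
        nlinarith
      have hAx2 : A * x ^ 2 < K := by
        have hx2 : x ^ 2 ≤ bnd ^ 2 := by
          nlinarith [mul_nonneg (sub_nonneg.2 hxb.le) (by linarith : (0:ℝ) ≤ bnd + x)]
        have : A * x ^ 2 ≤ A * bnd ^ 2 := mul_le_mul_of_nonneg_left hx2 hA.le
        rw [hK]
        linarith
      calc ‖F' x‖ ≤ A * x ^ 2 * (‖f x‖ + 1) + B * x ^ 2 * Real.exp (x ^ 2 / 2) :=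
            hF'bound x
        _ = A * x ^ 2 * (C x + ε * Real.exp (K * x) + 1) + B * x ^ 2 * Real.exp (x ^ 2 / 2) := by
            rw [hfx]
        _ < C' x + ε * (K * Real.exp (K * x)) := by
            simp only [hC, hC']
            have e4 : (1 : ℝ) ≤ Real.exp (x ^ 2 / 4) := Real.one_le_exp (by positivity)
            have e4p : (0 : ℝ) ≤ Real.exp (x ^ 2 / 4) := by linarith
            have e2pp : (0 : ℝ) ≤ Real.exp (x ^ 2 / 2) := (Real.exp_pos _).le
            have eKp : (0 : ℝ) < Real.exp (K * x) := Real.exp_pos _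
            have base1 : A * x ^ 2 * (A / 3 * x ^ 3) ≤ A / 6 * x ^ 4 := by
              nlinarith [mul_nonneg (mul_nonneg hA.le (pow_nonneg hx0 4))
                (sub_nonneg.2 hAx)]
            have h1 : A * x ^ 2 * (A / 3 * x ^ 3 * Real.exp (x ^ 2 / 4))
                ≤ A / 6 * x ^ 4 * Real.exp (x ^ 2 / 4) := by
              calc A * x ^ 2 * (A / 3 * x ^ 3 * Real.exp (x ^ 2 / 4))
                  = A * x ^ 2 * (A / 3 * x ^ 3) * Real.exp (x ^ 2 / 4) := by ring
                _ ≤ A / 6 * x ^ 4 * Real.exp (x ^ 2 / 4) :=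
                    mul_le_mul_of_nonneg_right base1 e4p
            have base2 : A * x ^ 2 * (2 * B * x) + B * x ^ 2 ≤ 2 * B * x ^ 2 := by
              nlinarith [mul_nonneg (mul_nonneg hB (sq_nonneg x))
                (by linarith : (0:ℝ) ≤ 1 - 2 * (A * x))]
            have h2 : A * x ^ 2 * (2 * B * x * Real.exp (x ^ 2 / 2))
                + B * x ^ 2 * Real.exp (x ^ 2 / 2)
                ≤ 2 * B * x ^ 2 * Real.exp (x ^ 2 / 2) := by
              calc A * x ^ 2 * (2 * B * x * Real.exp (x ^ 2 / 2))
                    + B * x ^ 2 * Real.exp (x ^ 2 / 2)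
                  = (A * x ^ 2 * (2 * B * x) + B * x ^ 2) * Real.exp (x ^ 2 / 2) := by ring
                _ ≤ 2 * B * x ^ 2 * Real.exp (x ^ 2 / 2) :=
                    mul_le_mul_of_nonneg_right base2 e2pp
            have h3 : A * x ^ 2 * 1 ≤ A * x ^ 2 * Real.exp (x ^ 2 / 4) :=
              mul_le_mul_of_nonneg_left e4 (by positivity)
            have h4 : A * x ^ 2 * (ε * Real.exp (K * x)) < ε * (K * Real.exp (K * x)) := by
              have h := mul_lt_mul_of_pos_right hAx2 (mul_pos hε eKp)
              nlinarith [h]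
            have h5 : 0 ≤ 2 * B * Real.exp (x ^ 2 / 2) := by positivity
            nlinarith [h1, h2, h3, h4, h5]
  -- remove ε
  have main : ∀ t : ℝ, t ∈ Set.Icc (0 : ℝ) bnd → ‖f t‖ ≤ C t := by
    intro t ht
    apply le_of_forall_pos_le_add
    intro δ hδ
    have hε : 0 < δ / Real.exp (K * t) := by positivity
    have := key _ hε t ht
    calc ‖f t‖ ≤ C t + δ / Real.exp (K * t) * Real.exp (K * t) := this
      _ = C t + δ := by
          rw [div_mul_cancel₀]
          exact (Real.exp_pos _).ne'
  -- conclude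
  intro t ht0 htb
  have hmem : t ∈ Set.Icc (0 : ℝ) bnd := ⟨ht0, htb⟩
  have hrw : φ t - (Real.exp (-(t ^ 2) / 2) : ℂ) = f t * (Real.exp (-(t ^ 2) / 2) : ℂ) := by
    simp only [hf]
    have : e2 t * (Real.exp (-(t ^ 2) / 2) : ℂ) = 1 := by
      have hz : ((t : ℂ) ^ 2 / 2) + ((-(t ^ 2) / 2 : ℝ) : ℂ) = 0 := by push_cast; ring
      simp only [he2, Complex.ofReal_exp, ← Complex.exp_add, hz, Complex.exp_zero]
    calc φ t - (Real.exp (-(t ^ 2) / 2) : ℂ)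
        = φ t * (e2 t * (Real.exp (-(t ^ 2) / 2) : ℂ)) - (Real.exp (-(t ^ 2) / 2) : ℂ) := by
          rw [this]; ring
      _ = (φ t * e2 t - 1) * (Real.exp (-(t ^ 2) / 2) : ℂ) := by ring
  rw [hrw, norm_mul]
  have hnorme : ‖(Real.exp (-(t ^ 2) / 2) : ℂ)‖ = Real.exp (-(t ^ 2) / 2) := by
    rw [Complex.norm_real, Real.norm_eq_abs, abs_of_pos (Real.exp_pos _)]
  rw [hnorme]
  calc ‖f t‖ * Real.exp (-(t ^ 2) / 2) ≤ C t * Real.exp (-(t ^ 2) / 2) := by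
        have := main t hmem
        gcongr
    _ = A / 3 * t ^ 3 * Real.exp (-(t ^ 2) / 4) + 2 * B * t := by
        simp only [hC]
        rw [add_mul, mul_assoc (A / 3 * t ^ 3), mul_assoc (2 * B * t), ← Real.exp_add,
          ← Real.exp_add, show t ^ 2 / 4 + -t ^ 2 / 2 = -t ^ 2 / 4 by ring,
          show t ^ 2 / 2 + -t ^ 2 / 2 = (0 : ℝ) by ring, Real.exp_zero, mul_one]
end

section
/- Let W be a BKR-decomposable random variable. Then for all t ∈ ℝ, E[(iW + t)·e^{itW}] = t²·E[H_t·e^{itW}], where H_t = i∑_{j∈J} X_j Z_j² R_2(−tZ_j) − i∑_{j∈J}∑_{k∈N_j} (X_j Z_{jk} − E[X_j Z_{jk}])(Z_j + V_{jk}) R_1(−t(Z_j + V_{jk})). -/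
open MeasureTheory ProbabilityTheory
open scoped ENNReal

/-- The process `H_t` associated with a BKR-decomposition:
`H_t = i∑_j X_j Z_j² R₂(−tZ_j) − i∑_j∑_{k∈N_j}(X_jZ_{jk} − E[X_jZ_{jk}])(Z_j+V_{jk})R₁(−t(Z_j+V_{jk}))`. -/
noncomputable def bkrH {Ω J : Type*} [MeasurableSpace Ω] [Fintype J]
    (μ : Measure Ω) (N : J → Finset J)
    (X Z : J → Ω → ℝ) (Zjk Vjk : J → J → Ω → ℝ) (t : ℝ) (ω : Ω) : ℂ :=
  Complex.I * ∑ j, ((X j ω * (Z j ω) ^ 2 : ℝ) : ℂ) * R 2 (-(t * Z j ω))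
    - Complex.I * ∑ j, ∑ k ∈ N j,
        ((X j ω * Zjk j k ω - ∫ ω', X j ω' * Zjk j k ω' ∂μ : ℝ) : ℂ)
          * ((Z j ω + Vjk j k ω : ℝ) : ℂ) * R 1 (-(t * (Z j ω + Vjk j k ω)))

lemma bkr_exp_summable (w : ℂ) : Summable (fun n : ℕ => w ^ n / (n.factorial : ℂ)) :=
  NormedSpace.expSeries_div_summable w

lemma bkr_exp_tsum (w : ℂ) : Complex.exp w = ∑' n : ℕ, w ^ n / (n.factorial : ℂ) := by
  rw [Complex.exp_eq_exp_ℂ, NormedSpace.exp_eq_tsum_div]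

lemma bkr_R_mul (l : ℕ) (z : ℝ) :
    (Complex.I * z) ^ l * R l z
      = Complex.exp (Complex.I * z)
        - ∑ i ∈ Finset.range l, (Complex.I * z) ^ i / (i.factorial : ℂ) := by
  have h1 : (Complex.I * (z:ℂ)) ^ l * R l z
      = ∑' m : ℕ, (Complex.I * (z:ℂ)) ^ (m + l) / ((m + l).factorial : ℂ) := by
    rw [R, ← tsum_mul_left]
    congr 1; funext m
    rw [pow_add]; ring
  have h2 := Summable.sum_add_tsum_nat_add (f := fun n : ℕ => (Complex.I * (z:ℂ)) ^ n / (n.factorial : ℂ))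
    l (bkr_exp_summable _)
  rw [h1, bkr_exp_tsum]
  linear_combination h2

lemma bkr_R_two (z : ℝ) :
    (Complex.I * z) ^ 2 * R 2 z = Complex.exp (Complex.I * z) - 1 - Complex.I * z := by
  have := bkr_R_mul 2 z
  simp [Finset.sum_range_succ] at this
  linear_combination this

lemma bkr_R_one (z : ℝ) :
    (Complex.I * z) * R 1 z = Complex.exp (Complex.I * z) - 1 := by
  have := bkr_R_mul 1 z
  simp [Finset.sum_range_succ] at this
  linear_combination this

/-- Abstract final algebraic bookkeeping for the main theorem. -/
lemma bkr_final_algebra {J : Type*} [Fintype J] (N : J → Finset J) (I t IE : ℂ)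
    (s u : J → ℂ) (vv cc : J → J → ℂ)
    (hc : (∑ j, ∑ k ∈ N j, cc j k) = 1)
    (hv : ∀ j, ∑ k ∈ N j, vv j k = u j) :
    (∑ j, (I * s j + t * u j)) - ∑ j, ∑ k ∈ N j, (t * vv j k - t * (cc j k * IE))
      = (∑ j, I * s j) + t * IE := by
  have h1 : ∀ j, ∑ k ∈ N j, (t * vv j k - t * (cc j k * IE))
      = t * u j - t * (∑ k ∈ N j, cc j k) * IE := by
    intro j
    rw [Finset.sum_sub_distrib, ← Finset.mul_sum, hv j, ← Finset.mul_sum, ← Finset.sum_mul,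
      ← mul_assoc]
  rw [Finset.sum_congr rfl fun j _ => h1 j, Finset.sum_add_distrib, Finset.sum_sub_distrib]
  have h2 : ∑ j, t * (∑ k ∈ N j, cc j k) * IE = t * IE := by
    rw [← Finset.sum_mul, ← Finset.mul_sum, hc, mul_one]
  rw [h2]
  ring

/-- For a BKR-decomposable `W`, `E[(iW + t)e^{itW}] = t²·E[H_t e^{itW}]` for all `t`. -/
theorem bkr_stein_identity
    {Ω J : Type*} [MeasurableSpace Ω] [Fintype J]
    (μ : Measure Ω) [IsProbabilityMeasure μ]
    (N : J → Finset J) (W : Ω → ℝ) (X Wj Z : J → Ω → ℝ)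
    (Zjk Wjk Vjk : J → J → Ω → ℝ)
    (hW2 : MemLp W 2 μ) (hX2 : ∀ j, MemLp (X j) 2 μ)
    (hWj2 : ∀ j, MemLp (Wj j) 2 μ) (hZ2 : ∀ j, MemLp (Z j) 2 μ)
    (hZjk2 : ∀ j k, MemLp (Zjk j k) 2 μ)
    (hWjk2 : ∀ j k, MemLp (Wjk j k) 2 μ)
    (hVjk2 : ∀ j k, MemLp (Vjk j k) 2 μ)
    (hW : ∀ ω, W ω = ∑ j, X j ω)
    (hXmean : ∀ j, ∫ ω, X j ω ∂μ = 0)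
    (hWnorm : ∫ ω, (W ω) ^ 2 ∂μ = 1)
    (hdec1 : ∀ j ω, W ω = Wj j ω + Z j ω)
    (hZdef : ∀ j ω, Z j ω = ∑ k ∈ N j, Zjk j k ω)
    (hdec2 : ∀ j, ∀ k ∈ N j, ∀ ω, Wj j ω = Wjk j k ω + Vjk j k ω)
    (hindep1 : ∀ j, IndepFun (Wj j) (X j) μ)
    (hindep2 : ∀ j, ∀ k ∈ N j, IndepFun (Wjk j k) (fun ω => (X j ω, Zjk j k ω)) μ)
    (hHint : ∀ t : ℝ, Integrable (bkrH μ N X Z Zjk Vjk t) μ)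
    (hHeint : ∀ t : ℝ, Integrable
      (fun ω => bkrH μ N X Z Zjk Vjk t ω * Complex.exp (Complex.I * t * W ω)) μ) :
    ∀ t : ℝ,
      ∫ ω, (Complex.I * W ω + t) * Complex.exp (Complex.I * t * W ω) ∂μ =
        (t : ℂ) ^ 2 * ∫ ω, bkrH μ N X Z Zjk Vjk t ω * Complex.exp (Complex.I * t * W ω) ∂μ := by
  intro t
  -- Basic integrability facts
  have hXi : ∀ j, Integrable (X j) μ := fun j => (hX2 j).integrable one_le_two
  have hmul : ∀ {f g : Ω → ℝ}, MemLp f 2 μ → MemLp g 2 μ →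
      Integrable (fun ω => f ω * g ω) μ := by
    intro f g hf hg
    have h : MemLp (f • g) 1 μ := hg.smul hf
    exact h.integrable le_rfl
  have hEsm : ∀ (g : Ω → ℝ), AEStronglyMeasurable g μ →
      AEStronglyMeasurable (fun ω => Complex.exp (Complex.I * t * g ω)) μ := by
    intro g hg
    exact Complex.continuous_exp.comp_aestronglyMeasurable
      ((Complex.continuous_ofReal.comp_aestronglyMeasurable hg).const_mul _)
  have hEbd : ∀ (g : Ω → ℝ) (ω : Ω), ‖Complex.exp (Complex.I * t * g ω)‖ ≤ 1 := by
    intro g ω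
    rw [show Complex.I * (t:ℂ) * (g ω : ℂ) = ((t * g ω : ℝ):ℂ) * Complex.I by push_cast; ring,
      Complex.norm_exp_ofReal_mul_I]
  have hIE : ∀ {f : Ω → ℝ} (g : Ω → ℝ), Integrable f μ → AEStronglyMeasurable g μ →
      Integrable (fun ω => (f ω : ℂ) * Complex.exp (Complex.I * t * g ω)) μ := by
    intro f g hf hg
    have h := Integrable.bdd_mul (c := 1) hf.ofReal (hEsm g hg) (Filter.Eventually.of_forall (hEbd g))
    simpa [mul_comm] using h
  -- the independence zero lemma
  have hmulb : ∀ {f b : Ω → ℝ}, Integrable f μ → AEStronglyMeasurable b μ →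
      (∀ ω, |b ω| ≤ 1) → Integrable (fun ω => b ω * f ω) μ := by
    intro f b hf hb hbd
    exact Integrable.bdd_mul (c := 1) hf hb (Filter.Eventually.of_forall fun ω => by simpa [Real.norm_eq_abs] using hbd ω)
  have hzero : ∀ {Y f : Ω → ℝ}, IndepFun Y f μ → Integrable f μ →
      AEStronglyMeasurable Y μ → (∫ ω, f ω ∂μ = 0) →
      ∫ ω, (f ω : ℂ) * Complex.exp (Complex.I * t * Y ω) ∂μ = 0 := by
    intro Y f hind hfi hYm hf0
    have hcosm : Measurable fun y : ℝ => Real.cos (t * y) :=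
      (Real.continuous_cos.comp (continuous_const.mul continuous_id)).measurable
    have hsinm : Measurable fun y : ℝ => Real.sin (t * y) :=
      (Real.continuous_sin.comp (continuous_const.mul continuous_id)).measurable
    have hcossm : AEStronglyMeasurable (fun ω => Real.cos (t * Y ω)) μ :=
      hcosm.comp_aemeasurable hYm.aemeasurable |>.aestronglyMeasurable
    have hsinsm : AEStronglyMeasurable (fun ω => Real.sin (t * Y ω)) μ :=
      hsinm.comp_aemeasurable hYm.aemeasurable |>.aestronglyMeasurable
    have hcosi : Integrable (fun ω => Real.cos (t * Y ω)) μ :=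
      (integrable_const (1:ℝ)).mono' hcossm
        (Filter.Eventually.of_forall fun ω => by
          simpa [Real.norm_eq_abs] using Real.abs_cos_le_one (t * Y ω))
    have hsini : Integrable (fun ω => Real.sin (t * Y ω)) μ :=
      (integrable_const (1:ℝ)).mono' hsinsm
        (Filter.Eventually.of_forall fun ω => by
          simpa [Real.norm_eq_abs] using Real.abs_sin_le_one (t * Y ω))
    have hcos0 : ∫ ω, Real.cos (t * Y ω) * f ω ∂μ = 0 := by
      have h : ∫ ω, Real.cos (t * Y ω) * f ω ∂μ
          = (∫ ω, Real.cos (t * Y ω) ∂μ) * ∫ ω, f ω ∂μ :=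
        (hind.comp hcosm measurable_id).integral_fun_mul_eq_mul_integral hcosi.1 hfi.1
      rw [h, hf0, mul_zero]
    have hsin0 : ∫ ω, Real.sin (t * Y ω) * f ω ∂μ = 0 := by
      have h : ∫ ω, Real.sin (t * Y ω) * f ω ∂μ
          = (∫ ω, Real.sin (t * Y ω) ∂μ) * ∫ ω, f ω ∂μ :=
        (hind.comp hsinm measurable_id).integral_fun_mul_eq_mul_integral hsini.1 hfi.1
      rw [h, hf0, mul_zero]
    have hrw : (fun ω => (f ω : ℂ) * Complex.exp (Complex.I * t * Y ω))
        = fun ω => ((Real.cos (t * Y ω) * f ω : ℝ) : ℂ)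
            + ((Real.sin (t * Y ω) * f ω : ℝ) : ℂ) * Complex.I := by
      funext ω
      rw [show Complex.I * (t:ℂ) * (Y ω : ℂ) = ((t * Y ω : ℝ):ℂ) * Complex.I by push_cast; ring,
        Complex.exp_mul_I]
      push_cast
      ring
    have I1 : Integrable (fun ω => ((Real.cos (t * Y ω) * f ω : ℝ) : ℂ)) μ :=
      (hmulb hfi hcossm fun ω => Real.abs_cos_le_one _).ofReal
    have I2 : Integrable (fun ω => ((Real.sin (t * Y ω) * f ω : ℝ) : ℂ) * Complex.I) μ :=
      ((hmulb hfi hsinsm fun ω => Real.abs_sin_le_one _).ofReal).mul_const Complex.I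
    have e1 : (∫ ω, ((Real.cos (t * Y ω) * f ω : ℝ) : ℂ) ∂μ)
        = ((∫ ω, Real.cos (t * Y ω) * f ω ∂μ : ℝ) : ℂ) := integral_ofReal
    have e2 : (∫ ω, ((Real.sin (t * Y ω) * f ω : ℝ) : ℂ) ∂μ)
        = ((∫ ω, Real.sin (t * Y ω) * f ω ∂μ : ℝ) : ℂ) := integral_ofReal
    rw [hrw, integral_add I1 I2, integral_mul_const, e1, e2, hcos0, hsin0]
    simp
  -- more integrability
  have hXZi : ∀ j, Integrable (fun ω => X j ω * Z j ω) μ := fun j => hmul (hX2 j) (hZ2 j)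
  have hXZjki : ∀ j k, Integrable (fun ω => X j ω * Zjk j k ω) μ :=
    fun j k => hmul (hX2 j) (hZjk2 j k)
  have hXWi : ∀ j, Integrable (fun ω => X j ω * W ω) μ := fun j => hmul (hX2 j) hW2
  have hXWji : ∀ j, Integrable (fun ω => X j ω * Wj j ω) μ := fun j => hmul (hX2 j) (hWj2 j)
  have hEint : Integrable (fun ω => Complex.exp (Complex.I * t * W ω)) μ := by
    simpa using hIE (f := fun _ => (1:ℝ)) W (integrable_const 1) hW2.1
  -- the key pointwise identity
  have key : ∀ ω, (t:ℂ)^2 * (bkrH μ N X Z Zjk Vjk t ω * Complex.exp (Complex.I * t * W ω))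
      = (∑ j, (Complex.I * ((X j ω : ℂ) * Complex.exp (Complex.I * t * W ω))
            + (t:ℂ) * (((X j ω * Z j ω : ℝ) : ℂ) * Complex.exp (Complex.I * t * W ω))
            - Complex.I * ((X j ω : ℂ) * Complex.exp (Complex.I * t * Wj j ω))))
        - ∑ j, ∑ k ∈ N j,
            ((t:ℂ) * (((X j ω * Zjk j k ω - ∫ ω', X j ω' * Zjk j k ω' ∂μ : ℝ) : ℂ)
                * Complex.exp (Complex.I * t * W ω))
              - (t:ℂ) * (((X j ω * Zjk j k ω - ∫ ω', X j ω' * Zjk j k ω' ∂μ : ℝ) : ℂ)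
                * Complex.exp (Complex.I * t * Wjk j k ω))) := by
    intro ω
    simp only [bkrH, sub_mul, mul_sub, Finset.sum_mul, Finset.mul_sum]
    congr 1
    · refine Finset.sum_congr rfl fun j _ => ?_
      have h2 := bkr_R_two (-(t * Z j ω))
      have hexp : Complex.exp (Complex.I * t * (W ω : ℂ))
          * Complex.exp (Complex.I * ((-(t * Z j ω) : ℝ) : ℂ))
          = Complex.exp (Complex.I * t * (Wj j ω : ℂ)) := by
        rw [← Complex.exp_add]
        congr 1
        rw [hdec1 j ω]; push_cast; ring
      push_cast at h2 hexp ⊢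
      linear_combination
        (-(Complex.I) * (X j ω : ℂ) * Complex.exp (Complex.I * t * (W ω : ℂ))) * h2
        + (-(Complex.I) * (X j ω : ℂ)) * hexp
        + (Complex.I * (t:ℂ)^2 * (X j ω : ℂ) * (Z j ω : ℂ)^2 * R 2 (-(t * Z j ω))
            * Complex.exp (Complex.I * t * (W ω : ℂ))
          - (t:ℂ) * (X j ω : ℂ) * (Z j ω : ℂ)
            * Complex.exp (Complex.I * t * (W ω : ℂ))) * Complex.I_sq
    · refine Finset.sum_congr rfl fun j _ => Finset.sum_congr rfl fun k hk => ?_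
      have h1 := bkr_R_one (-(t * (Z j ω + Vjk j k ω)))
      have hexp : Complex.exp (Complex.I * t * (W ω : ℂ))
          * Complex.exp (Complex.I * ((-(t * (Z j ω + Vjk j k ω)) : ℝ) : ℂ))
          = Complex.exp (Complex.I * t * (Wjk j k ω : ℂ)) := by
        rw [← Complex.exp_add]
        congr 1
        rw [hdec1 j ω, hdec2 j k hk ω]; push_cast; ring
      push_cast at h1 hexp ⊢
      linear_combination
        (-(t:ℂ) * ((X j ω:ℂ) * (Zjk j k ω:ℂ) - ((∫ ω', X j ω' * Zjk j k ω' ∂μ : ℝ):ℂ))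
          * Complex.exp (Complex.I * t * (W ω:ℂ))) * h1
        + (-(t:ℂ) * ((X j ω:ℂ) * (Zjk j k ω:ℂ)
            - ((∫ ω', X j ω' * Zjk j k ω' ∂μ : ℝ):ℂ))) * hexp
  -- integrability of the pieces
  have hAint : ∀ j, Integrable (fun ω =>
      Complex.I * ((X j ω : ℂ) * Complex.exp (Complex.I * t * W ω))
      + (t:ℂ) * (((X j ω * Z j ω : ℝ) : ℂ) * Complex.exp (Complex.I * t * W ω))
      - Complex.I * ((X j ω : ℂ) * Complex.exp (Complex.I * t * Wj j ω))) μ := fun j =>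
    (((hIE W (hXi j) hW2.1).const_mul _).add ((hIE W (hXZi j) hW2.1).const_mul _)).sub
      ((hIE (Wj j) (hXi j) (hWj2 j).1).const_mul _)
  have hBint : ∀ j k, Integrable (fun ω =>
      (t:ℂ) * (((X j ω * Zjk j k ω - ∫ ω', X j ω' * Zjk j k ω' ∂μ : ℝ) : ℂ)
        * Complex.exp (Complex.I * t * W ω))
      - (t:ℂ) * (((X j ω * Zjk j k ω - ∫ ω', X j ω' * Zjk j k ω' ∂μ : ℝ) : ℂ)
        * Complex.exp (Complex.I * t * Wjk j k ω))) μ := fun j k =>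
    ((hIE W ((hXZjki j k).sub (integrable_const _)) hW2.1).const_mul _).sub
      ((hIE (Wjk j k) ((hXZjki j k).sub (integrable_const _)) (hWjk2 j k).1).const_mul _)
  -- vanishing integrals via independence
  have hXjE0 : ∀ j, ∫ ω, (X j ω : ℂ) * Complex.exp (Complex.I * t * Wj j ω) ∂μ = 0 :=
    fun j => hzero (hindep1 j) (hXi j) (hWj2 j).1 (hXmean j)
  have hXZjkE0 : ∀ j, ∀ k ∈ N j,
      ∫ ω, ((X j ω * Zjk j k ω - ∫ ω', X j ω' * Zjk j k ω' ∂μ : ℝ) : ℂ)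
        * Complex.exp (Complex.I * t * Wjk j k ω) ∂μ = 0 := by
    intro j k hk
    have hψ : Measurable fun p : ℝ × ℝ => p.1 * p.2 - ∫ ω', X j ω' * Zjk j k ω' ∂μ :=
      (measurable_fst.mul measurable_snd).sub measurable_const
    have hind : IndepFun (Wjk j k)
        (fun ω => X j ω * Zjk j k ω - ∫ ω', X j ω' * Zjk j k ω' ∂μ) μ :=
      (hindep2 j k hk).comp measurable_id hψ
    refine hzero hind ((hXZjki j k).sub (integrable_const _)) (hWjk2 j k).1 ?_
    rw [integral_sub (hXZjki j k) (integrable_const _), integral_const]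
    simp
  -- sum over k of X Zjk
  have hsumk : ∀ j, ∑ k ∈ N j, ∫ ω, ((X j ω * Zjk j k ω : ℝ) : ℂ)
      * Complex.exp (Complex.I * t * W ω) ∂μ
      = ∫ ω, ((X j ω * Z j ω : ℝ) : ℂ) * Complex.exp (Complex.I * t * W ω) ∂μ := by
    intro j
    rw [← integral_finset_sum _ (fun k _ => hIE W (hXZjki j k) hW2.1)]
    congr 1; funext ω
    rw [hZdef j ω, Finset.mul_sum]
    push_cast
    rw [Finset.sum_mul]
  -- ∑∑ E[X Zjk] = 1
  have hsumkR : ∀ j, ∑ k ∈ N j, (∫ ω, X j ω * Zjk j k ω ∂μ) = ∫ ω, X j ω * Z j ω ∂μ := by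
    intro j
    rw [← integral_finset_sum _ (fun k _ => hXZjki j k)]
    congr 1; funext ω
    rw [hZdef j ω, Finset.mul_sum]
  have h3 : ∀ j, ∫ ω, X j ω * Wj j ω ∂μ = 0 := by
    intro j
    have h : ∫ ω, X j ω * Wj j ω ∂μ = (∫ ω, X j ω ∂μ) * ∫ ω, Wj j ω ∂μ :=
      (hindep1 j).symm.integral_fun_mul_eq_mul_integral (hXi j).1 ((hWj2 j).integrable one_le_two).1
    rw [h, hXmean j, zero_mul]
  have h4 : ∑ j, ∫ ω, X j ω * W ω ∂μ = 1 := by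
    rw [← integral_finset_sum _ (fun j _ => hXWi j), ← hWnorm]
    congr 1; funext ω
    rw [← Finset.sum_mul, ← hW ω]; ring
  have hc1 : ∑ j, ∑ k ∈ N j, (∫ ω, X j ω * Zjk j k ω ∂μ) = 1 := by
    rw [Finset.sum_congr rfl fun j _ => hsumkR j]
    have h2 : ∀ j, ∫ ω, X j ω * Z j ω ∂μ
        = (∫ ω, X j ω * W ω ∂μ) - ∫ ω, X j ω * Wj j ω ∂μ := by
      intro j
      rw [← integral_sub (hXWi j) (hXWji j)]
      congr 1; funext ω; rw [hdec1 j ω]; ring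
    rw [Finset.sum_congr rfl fun j _ => h2 j, Finset.sum_sub_distrib]
    simp [h3, h4]
  have hc1' : (∑ j, ∑ k ∈ N j, ((∫ ω', X j ω' * Zjk j k ω' ∂μ : ℝ) : ℂ)) = 1 := by
    exact_mod_cast hc1
  -- values of the integrals of the pieces
  have hAval : ∀ j, ∫ ω, (Complex.I * ((X j ω : ℂ) * Complex.exp (Complex.I * t * W ω))
      + (t:ℂ) * (((X j ω * Z j ω : ℝ) : ℂ) * Complex.exp (Complex.I * t * W ω))
      - Complex.I * ((X j ω : ℂ) * Complex.exp (Complex.I * t * Wj j ω))) ∂μ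
      = Complex.I * (∫ ω, (X j ω : ℂ) * Complex.exp (Complex.I * t * W ω) ∂μ)
        + (t:ℂ) * ∫ ω, ((X j ω * Z j ω : ℝ) : ℂ) * Complex.exp (Complex.I * t * W ω) ∂μ := by
    intro j
    have i1 : Integrable (fun ω =>
        Complex.I * ((X j ω : ℂ) * Complex.exp (Complex.I * t * W ω))) μ :=
      (hIE W (hXi j) hW2.1).const_mul _
    have i2 : Integrable (fun ω =>
        (t:ℂ) * (((X j ω * Z j ω : ℝ) : ℂ) * Complex.exp (Complex.I * t * W ω))) μ :=
      (hIE W (hXZi j) hW2.1).const_mul _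
    have i12 : Integrable (fun ω =>
        Complex.I * ((X j ω : ℂ) * Complex.exp (Complex.I * t * W ω))
        + (t:ℂ) * (((X j ω * Z j ω : ℝ) : ℂ) * Complex.exp (Complex.I * t * W ω))) μ :=
      i1.add i2
    have i3 : Integrable (fun ω =>
        Complex.I * ((X j ω : ℂ) * Complex.exp (Complex.I * t * Wj j ω))) μ :=
      (hIE (Wj j) (hXi j) (hWj2 j).1).const_mul _
    rw [integral_sub i12 i3, integral_add i1 i2,
      integral_const_mul, integral_const_mul, integral_const_mul, hXjE0 j, mul_zero, sub_zero]
  have hsplitc : ∀ j k, ∫ ω, ((X j ω * Zjk j k ω - ∫ ω', X j ω' * Zjk j k ω' ∂μ : ℝ) : ℂ)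
        * Complex.exp (Complex.I * t * W ω) ∂μ
      = (∫ ω, ((X j ω * Zjk j k ω : ℝ) : ℂ) * Complex.exp (Complex.I * t * W ω) ∂μ)
        - ((∫ ω', X j ω' * Zjk j k ω' ∂μ : ℝ) : ℂ)
          * ∫ ω, Complex.exp (Complex.I * t * W ω) ∂μ := by
    intro j k
    rw [← integral_const_mul, ← integral_sub (hIE W (hXZjki j k) hW2.1) (hEint.const_mul _)]
    congr 1; funext ω; push_cast; ring
  have hBval : ∀ j, ∀ k ∈ N j,
      ∫ ω, ((t:ℂ) * (((X j ω * Zjk j k ω - ∫ ω', X j ω' * Zjk j k ω' ∂μ : ℝ) : ℂ)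
          * Complex.exp (Complex.I * t * W ω))
        - (t:ℂ) * (((X j ω * Zjk j k ω - ∫ ω', X j ω' * Zjk j k ω' ∂μ : ℝ) : ℂ)
          * Complex.exp (Complex.I * t * Wjk j k ω))) ∂μ
      = (t:ℂ) * (∫ ω, ((X j ω * Zjk j k ω : ℝ) : ℂ)
            * Complex.exp (Complex.I * t * W ω) ∂μ)
        - (t:ℂ) * (((∫ ω', X j ω' * Zjk j k ω' ∂μ : ℝ) : ℂ)
            * ∫ ω, Complex.exp (Complex.I * t * W ω) ∂μ) := by
    intro j k hk
    have ic : Integrable (fun ω => X j ω * Zjk j k ω - ∫ ω', X j ω' * Zjk j k ω' ∂μ) μ :=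
      (hXZjki j k).sub (integrable_const _)
    have i1 : Integrable (fun ω =>
        (t:ℂ) * (((X j ω * Zjk j k ω - ∫ ω', X j ω' * Zjk j k ω' ∂μ : ℝ) : ℂ)
          * Complex.exp (Complex.I * t * W ω))) μ :=
      (hIE W ic hW2.1).const_mul _
    have i2 : Integrable (fun ω =>
        (t:ℂ) * (((X j ω * Zjk j k ω - ∫ ω', X j ω' * Zjk j k ω' ∂μ : ℝ) : ℂ)
          * Complex.exp (Complex.I * t * Wjk j k ω))) μ :=
      (hIE (Wjk j k) ic (hWjk2 j k).1).const_mul _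
    rw [integral_sub i1 i2,
      integral_const_mul, integral_const_mul, hXZjkE0 j k hk, mul_zero, sub_zero,
      hsplitc j k, mul_sub]
  -- splitting the left-hand side
  have hLHSsplit : (fun ω => (Complex.I * (W ω : ℂ) + (t:ℂ))
        * Complex.exp (Complex.I * t * W ω))
      = fun ω => (∑ j, Complex.I * ((X j ω : ℂ) * Complex.exp (Complex.I * t * W ω)))
          + (t:ℂ) * Complex.exp (Complex.I * t * W ω) := by
    funext ω
    rw [hW ω]
    push_cast
    rw [add_mul]
    congr 1
    rw [Finset.mul_sum, Finset.sum_mul]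
    exact Finset.sum_congr rfl fun j _ => mul_assoc _ _ _
  -- assembling everything
  calc ∫ ω, (Complex.I * (W ω : ℂ) + (t:ℂ)) * Complex.exp (Complex.I * t * W ω) ∂μ
      = ∫ ω, ((∑ j, Complex.I * ((X j ω : ℂ) * Complex.exp (Complex.I * t * W ω)))
          + (t:ℂ) * Complex.exp (Complex.I * t * W ω)) ∂μ := by rw [hLHSsplit]
    _ = (∑ j, Complex.I * ∫ ω, (X j ω : ℂ) * Complex.exp (Complex.I * t * W ω) ∂μ)
          + (t:ℂ) * ∫ ω, Complex.exp (Complex.I * t * W ω) ∂μ := by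
        rw [integral_add (integrable_finset_sum _ fun j _ => (hIE W (hXi j) hW2.1).const_mul _)
          (hEint.const_mul _),
          integral_finset_sum _ (fun j _ => (hIE W (hXi j) hW2.1).const_mul _)]
        simp only [integral_const_mul]
    _ = (∑ j, (Complex.I * (∫ ω, (X j ω : ℂ) * Complex.exp (Complex.I * t * W ω) ∂μ)
            + (t:ℂ) * ∫ ω, ((X j ω * Z j ω : ℝ) : ℂ) * Complex.exp (Complex.I * t * W ω) ∂μ))
        - ∑ j, ∑ k ∈ N j,
            ((t:ℂ) * (∫ ω, ((X j ω * Zjk j k ω : ℝ) : ℂ)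
                * Complex.exp (Complex.I * t * W ω) ∂μ)
              - (t:ℂ) * (((∫ ω', X j ω' * Zjk j k ω' ∂μ : ℝ) : ℂ)
                * ∫ ω, Complex.exp (Complex.I * t * W ω) ∂μ)) := by
        exact (bkr_final_algebra N Complex.I (t:ℂ)
          (∫ ω, Complex.exp (Complex.I * t * W ω) ∂μ)
          (fun j => ∫ ω, (X j ω : ℂ) * Complex.exp (Complex.I * t * W ω) ∂μ)
          (fun j => ∫ ω, ((X j ω * Z j ω : ℝ) : ℂ) * Complex.exp (Complex.I * t * W ω) ∂μ)
          (fun j k => ∫ ω, ((X j ω * Zjk j k ω : ℝ) : ℂ)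
            * Complex.exp (Complex.I * t * W ω) ∂μ)
          (fun j k => ((∫ ω', X j ω' * Zjk j k ω' ∂μ : ℝ) : ℂ))
          hc1' hsumk).symm
    _ = (∑ j, ∫ ω, (Complex.I * ((X j ω : ℂ) * Complex.exp (Complex.I * t * W ω))
            + (t:ℂ) * (((X j ω * Z j ω : ℝ) : ℂ) * Complex.exp (Complex.I * t * W ω))
            - Complex.I * ((X j ω : ℂ) * Complex.exp (Complex.I * t * Wj j ω))) ∂μ)
        - ∑ j, ∑ k ∈ N j,
            ∫ ω, ((t:ℂ) * (((X j ω * Zjk j k ω - ∫ ω', X j ω' * Zjk j k ω' ∂μ : ℝ) : ℂ)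
                * Complex.exp (Complex.I * t * W ω))
              - (t:ℂ) * (((X j ω * Zjk j k ω - ∫ ω', X j ω' * Zjk j k ω' ∂μ : ℝ) : ℂ)
                * Complex.exp (Complex.I * t * Wjk j k ω))) ∂μ := by
        congr 1
        · exact Finset.sum_congr rfl fun j _ => (hAval j).symm
        · exact Finset.sum_congr rfl fun j _ =>
            Finset.sum_congr rfl fun k hk => (hBval j k hk).symm
    _ = ∫ ω, ((∑ j, (Complex.I * ((X j ω : ℂ) * Complex.exp (Complex.I * t * W ω))
            + (t:ℂ) * (((X j ω * Z j ω : ℝ) : ℂ) * Complex.exp (Complex.I * t * W ω))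
            - Complex.I * ((X j ω : ℂ) * Complex.exp (Complex.I * t * Wj j ω))))
        - ∑ j, ∑ k ∈ N j,
            ((t:ℂ) * (((X j ω * Zjk j k ω - ∫ ω', X j ω' * Zjk j k ω' ∂μ : ℝ) : ℂ)
                * Complex.exp (Complex.I * t * W ω))
              - (t:ℂ) * (((X j ω * Zjk j k ω - ∫ ω', X j ω' * Zjk j k ω' ∂μ : ℝ) : ℂ)
                * Complex.exp (Complex.I * t * Wjk j k ω)))) ∂μ := by
        rw [integral_sub (integrable_finset_sum _ fun j _ => hAint j)
          (integrable_finset_sum _ fun j _ => integrable_finset_sum _ fun k _ => hBint j k),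
          integral_finset_sum _ (fun j _ => hAint j)]
        congr 1
        rw [integral_finset_sum _ (fun j _ => integrable_finset_sum _ fun k _ => hBint j k)]
        exact Finset.sum_congr rfl fun j _ =>
          (integral_finset_sum _ (fun k _ => hBint j k)).symm
    _ = ∫ ω, (t:ℂ)^2 * (bkrH μ N X Z Zjk Vjk t ω
          * Complex.exp (Complex.I * t * W ω)) ∂μ := by
        refine integral_congr_ae (Filter.EventuallyEq.of_eq ?_)
        funext ω
        exact (key ω).symm
    _ = (t:ℂ)^2 * ∫ ω, bkrH μ N X Z Zjk Vjk t ω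
          * Complex.exp (Complex.I * t * W ω) ∂μ := integral_const_mul _ _
end

section
/- Let W be BKR-decomposable and H_t as defined from the decomposition. Then for all t ∈ ℝ: E[|H_t|] ≤ (1/2)∑_{j∈J} E[|X_j|·Z_j²] + ∑_{j∈J}∑_{k∈N_j} ( E[|X_j Z_{jk}(Z_j + V_{jk})|] + E[|X_j Z_{jk}|]·E[|Z_j + V_{jk}|] ). -/
open MeasureTheory ProbabilityTheory

lemma abs_exp_I_sub_one (x : ℝ) : ‖Complex.exp (Complex.I * x) - 1‖ ≤ |x| := by
  have h1 : Complex.exp (Complex.I * x) = (Real.cos x : ℂ) + (Real.sin x : ℂ) * Complex.I := by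
    rw [mul_comm, Complex.exp_mul_I, Complex.ofReal_cos, Complex.ofReal_sin]
  have h2 : (‖Complex.exp (Complex.I * x) - 1‖)^2 ≤ |x|^2 := by
    rw [Complex.sq_norm, h1]
    have hns : Complex.normSq ((Real.cos x : ℂ) + (Real.sin x : ℂ) * Complex.I - 1)
        = (Real.cos x - 1)^2 + (Real.sin x)^2 := by
      simp [Complex.normSq_apply, Complex.cos_ofReal_re, Complex.sin_ofReal_re]; ring
    rw [hns, sq_abs]
    have hc := Real.one_sub_sq_div_two_le_cos (x := x)
    have hs := Real.sin_sq_add_cos_sq x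
    nlinarith [Real.neg_one_le_cos x, Real.cos_le_one x]
  nlinarith [norm_nonneg (Complex.exp (Complex.I * x) - 1), abs_nonneg x]

lemma abs_exp_I_sub_one_sub_aux {x : ℝ} (hx : 0 ≤ x) :
    ‖Complex.exp (Complex.I * x) - 1 - Complex.I * x‖ ≤ x ^ 2 / 2 := by
  have key : ∀ s : ℝ, HasDerivAt (fun t : ℝ => Complex.exp (Complex.I * t) - 1 - Complex.I * t)
      (Complex.I * (Complex.exp (Complex.I * s) - 1)) s := by
    intro s
    have he : HasDerivAt (fun w : ℂ => Complex.exp (Complex.I * w) - 1 - Complex.I * w)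
        (Complex.I * (Complex.exp (Complex.I * (s : ℂ)) - 1)) (s : ℂ) := by
      have h1 : HasDerivAt (fun w : ℂ => Complex.I * w) Complex.I (s : ℂ) := by
        simpa using (hasDerivAt_id (s : ℂ)).const_mul Complex.I
      have h2 : HasDerivAt (fun w : ℂ => Complex.exp (Complex.I * w))
          (Complex.exp (Complex.I * (s : ℂ)) * Complex.I) (s : ℂ) :=
        (Complex.hasDerivAt_exp _).comp _ h1
      exact ((h2.sub_const 1).sub h1).congr_deriv (by ring)
    exact he.comp_ofReal
  have hcont : Continuous fun s : ℝ => Complex.I * (Complex.exp (Complex.I * s) - 1) :=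
    continuous_const.mul ((Complex.continuous_exp.comp
      (continuous_const.mul Complex.continuous_ofReal)).sub continuous_const)
  have hftc := intervalIntegral.integral_eq_sub_of_hasDerivAt (a := 0) (b := x)
      (fun s _ => key s) (hcont.intervalIntegrable 0 x)
  have h0 : (∫ s in (0:ℝ)..x, Complex.I * (Complex.exp (Complex.I * s) - 1))
      = Complex.exp (Complex.I * x) - 1 - Complex.I * x := by
    rw [hftc]; simp
  rw [← h0]
  have hb : (∀ᵐ (s : ℝ) ∂(volume.restrict (Set.uIoc (0:ℝ) x)),
      ‖Complex.I * (Complex.exp (Complex.I * (s:ℝ)) - 1)‖ ≤ s) := by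
    rw [Set.uIoc_of_le hx]
    filter_upwards [ae_restrict_mem measurableSet_Ioc] with s hs
    have := abs_exp_I_sub_one s
    rw [norm_mul, Complex.norm_I, one_mul]
    calc ‖Complex.exp (Complex.I * s) - 1‖ ≤ |s| := this
    _ = s := abs_of_pos hs.1
  have := intervalIntegral.norm_integral_le_of_norm_le (μ := volume) (a := 0) (b := x)
      hx ((ae_restrict_iff' measurableSet_Ioc).mp (by rwa [Set.uIoc_of_le hx] at hb))
      (continuous_id.intervalIntegrable 0 x)
  calc ‖∫ s in (0:ℝ)..x, Complex.I * (Complex.exp (Complex.I * s) - 1)‖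
      ≤ |∫ s in (0:ℝ)..x, s| := this.trans (le_abs_self _)
    _ = x ^ 2 / 2 := by
        rw [integral_id]
        have h2 : ((x:ℝ)^2 - 0^2)/2 = x^2/2 := by ring
        rw [h2, abs_of_nonneg (by positivity)]

lemma abs_exp_I_sub_one_sub (x : ℝ) :
    ‖Complex.exp (Complex.I * x) - 1 - Complex.I * x‖ ≤ x ^ 2 / 2 := by
  rcases le_total 0 x with hx | hx
  · exact abs_exp_I_sub_one_sub_aux hx
  · have h := abs_exp_I_sub_one_sub_aux (x := -x) (by linarith)
    have hconj : (starRingEnd ℂ) (Complex.exp (Complex.I * x) - 1 - Complex.I * x)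
        = Complex.exp (Complex.I * (-x : ℝ)) - 1 - Complex.I * (-x : ℝ) := by
      simp [map_sub, ← Complex.exp_conj, map_mul, Complex.conj_I, Complex.conj_ofReal]
    calc ‖Complex.exp (Complex.I * x) - 1 - Complex.I * x‖
        = ‖(starRingEnd ℂ) (Complex.exp (Complex.I * x) - 1 - Complex.I * x)‖ :=
          (Complex.norm_conj _).symm
      _ = ‖Complex.exp (Complex.I * (-x : ℝ)) - 1 - Complex.I * (-x : ℝ)‖ := by
          rw [hconj]
      _ ≤ (-x) ^ 2 / 2 := h
      _ = x ^ 2 / 2 := by ring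

lemma R_one_mul (x : ℝ) :
    (Complex.I * x) * R 1 x = Complex.exp (Complex.I * x) - 1 := by
  set w : ℂ := Complex.I * x with hw
  have hsum : Summable (fun n : ℕ => w ^ n / (n.factorial : ℂ)) :=
    NormedSpace.expSeries_div_summable w
  have hexp : Complex.exp w = ∑' n : ℕ, w ^ n / (n.factorial : ℂ) := by
    rw [Complex.exp_eq_exp_ℂ, NormedSpace.exp_eq_tsum_div]
  have hpeel : ∑' n : ℕ, w ^ n / (n.factorial : ℂ)
      = 1 + ∑' m : ℕ, w ^ (m + 1) / ((m + 1).factorial : ℂ) := by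
    rw [Summable.tsum_eq_zero_add hsum]; simp
  have hR : w * R 1 x = ∑' m : ℕ, w ^ (m + 1) / ((m + 1).factorial : ℂ) := by
    rw [R, ← tsum_mul_left]
    congr 1; funext m
    rw [pow_succ]; ring
  rw [hR, hexp, hpeel]; ring

lemma R_two_mul (x : ℝ) :
    (Complex.I * x) ^ 2 * R 2 x = Complex.exp (Complex.I * x) - 1 - Complex.I * x := by
  set w : ℂ := Complex.I * x with hw
  have hsum : Summable (fun n : ℕ => w ^ n / (n.factorial : ℂ)) :=
    NormedSpace.expSeries_div_summable w
  have hexp : Complex.exp w = ∑' n : ℕ, w ^ n / (n.factorial : ℂ) := by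
    rw [Complex.exp_eq_exp_ℂ, NormedSpace.exp_eq_tsum_div]
  have hpeel : ∑' n : ℕ, w ^ n / (n.factorial : ℂ)
      = 1 + ∑' m : ℕ, w ^ (m + 1) / ((m + 1).factorial : ℂ) := by
    rw [Summable.tsum_eq_zero_add hsum]; simp
  have hsum2 : Summable (fun m : ℕ => w ^ (m + 1) / ((m + 1).factorial : ℂ)) :=
    hsum.comp_injective (add_left_injective 1)
  have hpeel2 : ∑' m : ℕ, w ^ (m + 1) / ((m + 1).factorial : ℂ)
      = w + ∑' m : ℕ, w ^ (m + 2) / ((m + 2).factorial : ℂ) := by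
    rw [Summable.tsum_eq_zero_add hsum2]
    norm_num
  have hR : w ^ 2 * R 2 x = ∑' m : ℕ, w ^ (m + 2) / ((m + 2).factorial : ℂ) := by
    rw [R, ← tsum_mul_left]
    congr 1; funext m
    rw [show m + 2 = m + 1 + 1 from rfl, pow_succ, pow_succ]; ring
  rw [hR, hexp, hpeel, hpeel2]; ring

lemma abs_R_one_le (x : ℝ) : ‖R 1 x‖ ≤ 1 := by
  rcases eq_or_ne x 0 with h | h
  · subst h
    have h1 : R 1 0 = 1 := by
      rw [R, tsum_eq_single 0 ?_]
      · simp
      · intro m hm; simp [zero_pow hm]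
    simp [h1]
  · have hmul := R_one_mul x
    have hx : (0:ℝ) < |x| := abs_pos.mpr h
    have hw : (Complex.I * x) ≠ 0 :=
      mul_ne_zero Complex.I_ne_zero (Complex.ofReal_ne_zero.mpr h)
    have hRx : R 1 x = (Complex.exp (Complex.I * x) - 1) / (Complex.I * x) := by
      rw [eq_div_iff hw]
      linear_combination hmul
    rw [hRx, norm_div, norm_mul, Complex.norm_I, one_mul, Complex.norm_real, Real.norm_eq_abs,
      div_le_one hx]
    exact abs_exp_I_sub_one x

lemma abs_R_two_le (x : ℝ) : ‖R 2 x‖ ≤ 1 / 2 := by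
  rcases eq_or_ne x 0 with h | h
  · subst h
    have h1 : R 2 0 = 1 / 2 := by
      rw [R, tsum_eq_single 0 ?_]
      · norm_num
      · intro m hm; simp [zero_pow hm]
    rw [h1]
    simp
  · have hmul := R_two_mul x
    have hx : (0:ℝ) < x ^ 2 := by positivity
    have hw : (Complex.I * x) ^ 2 ≠ 0 :=
      pow_ne_zero _ (mul_ne_zero Complex.I_ne_zero (Complex.ofReal_ne_zero.mpr h))
    have hRx : R 2 x = (Complex.exp (Complex.I * x) - 1 - Complex.I * x) / (Complex.I * x) ^ 2 := by
      rw [eq_div_iff hw]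
      linear_combination hmul
    have habs : ‖(Complex.I * x) ^ 2‖ = x ^ 2 := by
      rw [norm_pow, norm_mul, Complex.norm_I, one_mul, Complex.norm_real, Real.norm_eq_abs, sq_abs]
    rw [hRx, norm_div, habs, div_le_iff₀ hx]
    calc ‖Complex.exp (Complex.I * x) - 1 - Complex.I * x‖
        ≤ x ^ 2 / 2 := abs_exp_I_sub_one_sub x
      _ = 1 / 2 * x ^ 2 := by ring

/-- First-moment bound on `H_t` for a BKR-decomposable `W`. -/
theorem bkr_H_first_moment_bound
    {Ω J : Type*} [MeasurableSpace Ω] [Fintype J]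
    (μ : Measure Ω) [IsProbabilityMeasure μ]
    (N : J → Finset J) (W : Ω → ℝ) (X Wj Z : J → Ω → ℝ)
    (Zjk Wjk Vjk : J → J → Ω → ℝ)
    (hW2 : MemLp W 2 μ) (hX2 : ∀ j, MemLp (X j) 2 μ)
    (hWj2 : ∀ j, MemLp (Wj j) 2 μ) (hZ2 : ∀ j, MemLp (Z j) 2 μ)
    (hZjk2 : ∀ j k, MemLp (Zjk j k) 2 μ)
    (hWjk2 : ∀ j k, MemLp (Wjk j k) 2 μ)
    (hVjk2 : ∀ j k, MemLp (Vjk j k) 2 μ)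
    (hW : ∀ ω, W ω = ∑ j, X j ω)
    (hXmean : ∀ j, ∫ ω, X j ω ∂μ = 0)
    (hWnorm : ∫ ω, (W ω) ^ 2 ∂μ = 1)
    (hdec1 : ∀ j ω, W ω = Wj j ω + Z j ω)
    (hZdef : ∀ j ω, Z j ω = ∑ k ∈ N j, Zjk j k ω)
    (hdec2 : ∀ j, ∀ k ∈ N j, ∀ ω, Wj j ω = Wjk j k ω + Vjk j k ω)
    (hindep1 : ∀ j, IndepFun (Wj j) (X j) μ)
    (hindep2 : ∀ j, ∀ k ∈ N j, IndepFun (Wjk j k) (fun ω => (X j ω, Zjk j k ω)) μ)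
    (hint1 : ∀ j, Integrable (fun ω => |X j ω| * (Z j ω) ^ 2) μ)
    (hint2 : ∀ j k, Integrable (fun ω => |X j ω * Zjk j k ω * (Z j ω + Vjk j k ω)|) μ) :
    ∀ t : ℝ,
      ∫ ω, ‖bkrH μ N X Z Zjk Vjk t ω‖ ∂μ ≤
        (1 / 2) * ∑ j, ∫ ω, |X j ω| * (Z j ω) ^ 2 ∂μ
          + ∑ j, ∑ k ∈ N j,
              ((∫ ω, |X j ω * Zjk j k ω * (Z j ω + Vjk j k ω)| ∂μ)
                + (∫ ω, |X j ω * Zjk j k ω| ∂μ) * ∫ ω, |Z j ω + Vjk j k ω| ∂μ) := by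
  intro t
  classical
  set c : J → J → ℝ := fun j k => ∫ ω, |X j ω * Zjk j k ω| ∂μ with hc
  have hYint : ∀ j k, Integrable (fun ω => |Z j ω + Vjk j k ω|) μ := fun j k =>
    (((hZ2 j).add (hVjk2 j k)).integrable one_le_two).abs
  have hterm : ∀ j k, Integrable (fun ω =>
      |X j ω * Zjk j k ω * (Z j ω + Vjk j k ω)| + c j k * |Z j ω + Vjk j k ω|) μ :=
    fun j k => (hint2 j k).add ((hYint j k).const_mul _)
  have hg1 : Integrable (fun ω => (1/2 : ℝ) * ∑ j, |X j ω| * (Z j ω) ^ 2) μ :=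
    (integrable_finset_sum _ fun j _ => hint1 j).const_mul _
  have hg2 : Integrable (fun ω => ∑ j, ∑ k ∈ N j,
      (|X j ω * Zjk j k ω * (Z j ω + Vjk j k ω)| + c j k * |Z j ω + Vjk j k ω|)) μ :=
    integrable_finset_sum _ fun j _ => integrable_finset_sum _ fun k _ => hterm j k
  have hgi : Integrable (fun ω => (1/2 : ℝ) * ∑ j, |X j ω| * (Z j ω) ^ 2
      + ∑ j, ∑ k ∈ N j, (|X j ω * Zjk j k ω * (Z j ω + Vjk j k ω)|
        + c j k * |Z j ω + Vjk j k ω|)) μ := hg1.add hg2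
  have hpt : ∀ ω, ‖bkrH μ N X Z Zjk Vjk t ω‖ ≤
      (1/2 : ℝ) * ∑ j, |X j ω| * (Z j ω) ^ 2
      + ∑ j, ∑ k ∈ N j, (|X j ω * Zjk j k ω * (Z j ω + Vjk j k ω)|
        + c j k * |Z j ω + Vjk j k ω|) := by
    intro ω
    rw [bkrH]
    set S1 : ℂ := ∑ j, ((X j ω * (Z j ω) ^ 2 : ℝ) : ℂ) * R 2 (-(t * Z j ω)) with hS1
    set S2 : ℂ := ∑ j, ∑ k ∈ N j,
        ((X j ω * Zjk j k ω - ∫ ω', X j ω' * Zjk j k ω' ∂μ : ℝ) : ℂ)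
          * ((Z j ω + Vjk j k ω : ℝ) : ℂ) * R 1 (-(t * (Z j ω + Vjk j k ω))) with hS2
    have h1 : ‖Complex.I * S1 - Complex.I * S2‖
        ≤ ‖S1‖ + ‖S2‖ := by
      calc ‖Complex.I * S1 - Complex.I * S2‖
          ≤ ‖Complex.I * S1‖ + ‖Complex.I * S2‖ := by
            simpa using norm_sub_le (Complex.I * S1) (Complex.I * S2)
        _ = ‖S1‖ + ‖S2‖ := by
            rw [norm_mul, norm_mul, Complex.norm_I, one_mul, one_mul]
    refine h1.trans (add_le_add ?_ ?_)
    · calc ‖S1‖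
          ≤ ∑ j, ‖((X j ω * (Z j ω) ^ 2 : ℝ) : ℂ) * R 2 (-(t * Z j ω))‖ :=
            norm_sum_le _ _
        _ ≤ ∑ j, |X j ω| * (Z j ω) ^ 2 * (1/2) := by
            refine Finset.sum_le_sum fun j _ => ?_
            rw [norm_mul, Complex.norm_real, Real.norm_eq_abs, abs_mul, abs_of_nonneg (sq_nonneg (Z j ω))]
            exact mul_le_mul_of_nonneg_left (abs_R_two_le _) (by positivity)
        _ = (1/2 : ℝ) * ∑ j, |X j ω| * (Z j ω) ^ 2 := by
            rw [← Finset.sum_mul, mul_comm]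
    · calc ‖S2‖
          ≤ ∑ j, ‖∑ k ∈ N j,
              ((X j ω * Zjk j k ω - ∫ ω', X j ω' * Zjk j k ω' ∂μ : ℝ) : ℂ)
                * ((Z j ω + Vjk j k ω : ℝ) : ℂ) * R 1 (-(t * (Z j ω + Vjk j k ω)))‖ :=
            norm_sum_le _ _
        _ ≤ ∑ j, ∑ k ∈ N j, ‖
              ((X j ω * Zjk j k ω - ∫ ω', X j ω' * Zjk j k ω' ∂μ : ℝ) : ℂ)
                * ((Z j ω + Vjk j k ω : ℝ) : ℂ) * R 1 (-(t * (Z j ω + Vjk j k ω)))‖ :=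
            Finset.sum_le_sum fun j _ => norm_sum_le _ _
        _ ≤ ∑ j, ∑ k ∈ N j, (|X j ω * Zjk j k ω * (Z j ω + Vjk j k ω)|
              + c j k * |Z j ω + Vjk j k ω|) := by
            refine Finset.sum_le_sum fun j _ => Finset.sum_le_sum fun k _ => ?_
            have hm : |∫ ω', X j ω' * Zjk j k ω' ∂μ| ≤ c j k := by
              simpa only [hc, Real.norm_eq_abs] using
                norm_integral_le_integral_norm (μ := μ) (f := fun ω' => X j ω' * Zjk j k ω')
            have h2 : |X j ω * Zjk j k ω - ∫ ω', X j ω' * Zjk j k ω' ∂μ|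
                ≤ |X j ω * Zjk j k ω| + c j k := by
              calc |X j ω * Zjk j k ω - ∫ ω', X j ω' * Zjk j k ω' ∂μ|
                  ≤ |X j ω * Zjk j k ω| + |∫ ω', X j ω' * Zjk j k ω' ∂μ| := abs_sub _ _
                _ ≤ |X j ω * Zjk j k ω| + c j k := by linarith
            rw [norm_mul, norm_mul, Complex.norm_real, Real.norm_eq_abs, Complex.norm_real, Real.norm_eq_abs]
            calc |X j ω * Zjk j k ω - ∫ ω', X j ω' * Zjk j k ω' ∂μ| * |Z j ω + Vjk j k ω|
                  * ‖R 1 (-(t * (Z j ω + Vjk j k ω)))‖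
                ≤ |X j ω * Zjk j k ω - ∫ ω', X j ω' * Zjk j k ω' ∂μ| * |Z j ω + Vjk j k ω|
                  * 1 := mul_le_mul_of_nonneg_left (abs_R_one_le _) (by positivity)
              _ = |X j ω * Zjk j k ω - ∫ ω', X j ω' * Zjk j k ω' ∂μ| * |Z j ω + Vjk j k ω| :=
                  mul_one _
              _ ≤ (|X j ω * Zjk j k ω| + c j k) * |Z j ω + Vjk j k ω| :=
                  mul_le_mul_of_nonneg_right h2 (abs_nonneg _)
              _ = |X j ω * Zjk j k ω * (Z j ω + Vjk j k ω)| + c j k * |Z j ω + Vjk j k ω| := by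
                  rw [add_mul, abs_mul (X j ω * Zjk j k ω) (Z j ω + Vjk j k ω)]
  have hmono := integral_mono_of_nonneg
    (Filter.Eventually.of_forall fun ω => norm_nonneg _) hgi
    (Filter.Eventually.of_forall hpt)
  refine hmono.trans (le_of_eq ?_)
  rw [integral_add hg1 hg2, integral_const_mul,
    integral_finset_sum _ (fun j _ => hint1 j),
    integral_finset_sum _ (fun j _ => integrable_finset_sum _ fun k _ => hterm j k)]
  congr 1
  refine Finset.sum_congr rfl fun j _ => ?_
  rw [integral_finset_sum _ fun k _ => hterm j k]
  refine Finset.sum_congr rfl fun k _ => ?_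
  rw [integral_add (hint2 j k) ((hYint j k).const_mul _), integral_const_mul]
end

section
/- Let W be BKR-decomposable and H_t as defined. Then |Cov(H_t, e^{−itW})| ≤ Var(∑_{j∈J} X_j Z_j² R_2(−tZ_j))^{1/2} + Var(∑_{j∈J}∑_{k∈N_j} X_j Z_{jk}(Z_j + V_{jk}) R_1(−t(Z_j + V_{jk})))^{1/2} + Var(∑_{j∈J}∑_{k∈N_j} E[X_j Z_{jk}](Z_j + V_{jk}) R_1(−t(Z_j + V_{jk})))^{1/2}, where for a complex random variable the variance means E[|X − E[X]|²]. -/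
open MeasureTheory ProbabilityTheory

/-- Covariance of two complex random variables:
`Cov(X,Y) = E[(X − EX)·conj(Y − EY)]`. -/
noncomputable def covC {Ω : Type*} [MeasurableSpace Ω] (μ : Measure Ω) (X Y : Ω → ℂ) : ℂ :=
  ∫ ω, (X ω - ∫ ω', X ω' ∂μ) * star (Y ω - ∫ ω', Y ω' ∂μ) ∂μ

/-- Variance of a complex random variable: `Var(X) = E[|X − EX|²]`. -/
noncomputable def varC {Ω : Type*} [MeasurableSpace Ω] (μ : Measure Ω) (X : Ω → ℂ) : ℝ :=
  ∫ ω, ‖X ω - ∫ ω', X ω' ∂μ‖ ^ 2 ∂μ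

section BKRHelpers

open scoped ComplexInnerProductSpace

variable {Ω : Type*} [MeasurableSpace Ω] {μ : Measure Ω}

lemma bkr_int_mul_star {f g : Ω → ℂ} (hf : MemLp f 2 μ) (hg : MemLp g 2 μ) :
    Integrable (fun ω => f ω * star (g ω)) μ := by
  have h := MeasureTheory.L2.integrable_inner (𝕜 := ℂ) (hg.toLp g) (hf.toLp f)
  refine h.congr ?_
  filter_upwards [hg.coeFn_toLp, hf.coeFn_toLp] with ω h1 h2
  simp [h1, h2, RCLike.inner_apply, mul_comm]

lemma bkr_norm_toLp_eq {f : Ω → ℂ} (hf : MemLp f 2 μ) :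
    ‖hf.toLp f‖ = Real.sqrt (∫ ω, ‖f ω‖ ^ 2 ∂μ) := by
  have h1 : (inner ℂ (hf.toLp f) (hf.toLp f) : ℂ) = ((∫ ω, ‖f ω‖ ^ 2 ∂μ : ℝ) : ℂ) := by
    rw [MeasureTheory.L2.inner_def,
      show ((∫ ω, ‖f ω‖ ^ 2 ∂μ : ℝ) : ℂ) = ∫ ω, ((‖f ω‖ ^ 2 : ℝ) : ℂ) ∂μ
        from integral_ofReal.symm]
    refine integral_congr_ae ?_
    filter_upwards [hf.coeFn_toLp] with ω h
    rw [h]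
    simp only [RCLike.inner_apply', RCLike.conj_mul]
    norm_cast
  have h2 : ‖hf.toLp f‖ ^ 2 = ∫ ω, ‖f ω‖ ^ 2 ∂μ := by
    have := inner_self_eq_norm_sq (𝕜 := ℂ) (hf.toLp f)
    rw [h1] at this
    simpa using this.symm
  rw [← h2, Real.sqrt_sq (norm_nonneg _)]

lemma bkr_cs_integral {f g : Ω → ℂ} (hf : MemLp f 2 μ) (hg : MemLp g 2 μ) :
    ‖∫ ω, f ω * star (g ω) ∂μ‖ ≤
      Real.sqrt (∫ ω, ‖f ω‖ ^ 2 ∂μ) * Real.sqrt (∫ ω, ‖g ω‖ ^ 2 ∂μ) := by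
  have h1 : (inner ℂ (hg.toLp g) (hf.toLp f) : ℂ) = ∫ ω, f ω * star (g ω) ∂μ := by
    rw [MeasureTheory.L2.inner_def]
    refine integral_congr_ae ?_
    filter_upwards [hg.coeFn_toLp, hf.coeFn_toLp] with ω h1 h2
    simp [h1, h2, RCLike.inner_apply, mul_comm]
  calc ‖∫ ω, f ω * star (g ω) ∂μ‖ = ‖(inner ℂ (hg.toLp g) (hf.toLp f) : ℂ)‖ := by
        rw [h1]
    _ ≤ ‖hg.toLp g‖ * ‖hf.toLp f‖ := norm_inner_le_norm _ _
    _ = _ := by rw [bkr_norm_toLp_eq hf, bkr_norm_toLp_eq hg, mul_comm]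

lemma bkr_abs_covC_le [IsProbabilityMeasure μ] {f g : Ω → ℂ}
    (hf : MemLp f 2 μ) (hg : MemLp g 2 μ) :
    ‖covC μ f g‖ ≤ Real.sqrt (varC μ f) * Real.sqrt (varC μ g) := by
  have hf' : MemLp (fun ω => f ω - ∫ ω', f ω' ∂μ) 2 μ := hf.sub (memLp_const _)
  have hg' : MemLp (fun ω => g ω - ∫ ω', g ω' ∂μ) 2 μ := hg.sub (memLp_const _)
  exact bkr_cs_integral hf' hg'

lemma bkr_memLp_exp [IsProbabilityMeasure μ] {W : Ω → ℝ}
    (hW : AEStronglyMeasurable W μ) (t : ℝ) :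
    MemLp (fun ω => Complex.exp (-(Complex.I * t * W ω))) 2 μ := by
  have hc : Continuous fun x : ℝ => Complex.exp (-(Complex.I * t * x)) := by fun_prop
  refine MemLp.of_bound (hc.comp_aestronglyMeasurable hW) 1 (ae_of_all _ fun ω => ?_)
  rw [Complex.norm_exp]
  simp

lemma bkr_varC_exp_le_one [IsProbabilityMeasure μ] {W : Ω → ℝ}
    (hW : AEStronglyMeasurable W μ) (t : ℝ) :
    varC μ (fun ω => Complex.exp (-(Complex.I * t * W ω))) ≤ 1 := by
  set e := fun ω => Complex.exp (-(Complex.I * t * W ω)) with he_def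
  have he : MemLp e 2 μ := bkr_memLp_exp hW t
  have hce : Integrable e μ := he.integrable one_le_two
  set c := ∫ ω, e ω ∂μ with hc_def
  have habs : ∀ ω, ‖e ω‖ = 1 := by
    intro ω; rw [he_def]; simp [Complex.norm_exp]
  have hg : Integrable (fun ω => (e ω * (starRingEnd ℂ) c).re) μ :=
    (hce.mul_const _).re
  have key : ∀ ω, ‖e ω - c‖ ^ 2 =
      1 - 2 * (e ω * (starRingEnd ℂ) c).re + ‖c‖ ^ 2 := by
    intro ω
    have h1 : Complex.normSq (e ω) = 1 := by rw [← Complex.sq_norm, habs ω]; norm_num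
    rw [Complex.sq_norm, Complex.normSq_sub, h1, Complex.sq_norm]
    ring
  have hint : ∫ ω, (e ω * (starRingEnd ℂ) c).re ∂μ = ‖c‖ ^ 2 := by
    have h1 : ∫ ω, (e ω * (starRingEnd ℂ) c).re ∂μ
        = (∫ ω, e ω * (starRingEnd ℂ) c ∂μ).re := by
      rw [← RCLike.re_eq_complex_re, ← integral_re (hce.mul_const _)]
    rw [h1, integral_mul_const, ← hc_def, Complex.mul_conj, Complex.sq_norm]
    simp
  have : varC μ e = 1 - ‖c‖ ^ 2 := by
    rw [varC]
    rw [show (fun ω => ‖e ω - ∫ ω', e ω' ∂μ‖ ^ 2)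
        = fun ω => 1 - 2 * (e ω * (starRingEnd ℂ) c).re + ‖c‖ ^ 2 from
      funext fun ω => key ω]
    rw [integral_add (f := fun ω => 1 - 2 * (e ω * (starRingEnd ℂ) c).re)
        (g := fun _ => ‖c‖ ^ 2)
        ((integrable_const _).sub (hg.const_mul 2)) (integrable_const _),
      integral_sub (f := fun _ => (1:ℝ)) (g := fun ω => 2 * (e ω * (starRingEnd ℂ) c).re)
        (integrable_const _) (hg.const_mul 2), integral_const_mul, hint]
    simp [measure_univ]
    ring
  rw [this]
  have := sq_nonneg (‖c‖)
  linarith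

lemma bkr_covC_combo [IsProbabilityMeasure μ] (S1 S2 S3 e : Ω → ℂ)
    (h1 : MemLp S1 2 μ) (h2 : MemLp S2 2 μ) (h3 : MemLp S3 2 μ) (he : MemLp e 2 μ) :
    covC μ (fun ω => Complex.I * S1 ω - Complex.I * S2 ω + Complex.I * S3 ω) e
      = Complex.I * covC μ S1 e - Complex.I * covC μ S2 e + Complex.I * covC μ S3 e := by
  have hi1 : Integrable S1 μ := h1.integrable one_le_two
  have hi2 : Integrable S2 μ := h2.integrable one_le_two
  have hi3 : Integrable S3 μ := h3.integrable one_le_two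
  have hmean : ∫ ω, (Complex.I * S1 ω - Complex.I * S2 ω + Complex.I * S3 ω) ∂μ
      = Complex.I * ∫ ω, S1 ω ∂μ - Complex.I * ∫ ω, S2 ω ∂μ + Complex.I * ∫ ω, S3 ω ∂μ := by
    rw [integral_add (f := fun ω => Complex.I * S1 ω - Complex.I * S2 ω)
        (g := fun ω => Complex.I * S3 ω)
        (((hi1.const_mul _).sub (hi2.const_mul _))) (hi3.const_mul _),
      integral_sub (f := fun ω => Complex.I * S1 ω) (g := fun ω => Complex.I * S2 ω)
        (hi1.const_mul _) (hi2.const_mul _),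
      integral_const_mul, integral_const_mul, integral_const_mul]
  have ha1 : Integrable (fun ω => (S1 ω - ∫ ω', S1 ω' ∂μ) * star (e ω - ∫ ω', e ω' ∂μ)) μ :=
    bkr_int_mul_star (h1.sub (memLp_const _)) (he.sub (memLp_const _))
  have ha2 : Integrable (fun ω => (S2 ω - ∫ ω', S2 ω' ∂μ) * star (e ω - ∫ ω', e ω' ∂μ)) μ :=
    bkr_int_mul_star (h2.sub (memLp_const _)) (he.sub (memLp_const _))
  have ha3 : Integrable (fun ω => (S3 ω - ∫ ω', S3 ω' ∂μ) * star (e ω - ∫ ω', e ω' ∂μ)) μ :=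
    bkr_int_mul_star (h3.sub (memLp_const _)) (he.sub (memLp_const _))
  rw [covC, covC, covC, covC]
  have hcong : (fun ω => (Complex.I * S1 ω - Complex.I * S2 ω + Complex.I * S3 ω
        - ∫ ω', (Complex.I * S1 ω' - Complex.I * S2 ω' + Complex.I * S3 ω') ∂μ)
        * star (e ω - ∫ ω', e ω' ∂μ))
      = fun ω => Complex.I * ((S1 ω - ∫ ω', S1 ω' ∂μ) * star (e ω - ∫ ω', e ω' ∂μ))
        - Complex.I * ((S2 ω - ∫ ω', S2 ω' ∂μ) * star (e ω - ∫ ω', e ω' ∂μ))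
        + Complex.I * ((S3 ω - ∫ ω', S3 ω' ∂μ) * star (e ω - ∫ ω', e ω' ∂μ)) := by
    funext ω
    rw [hmean]
    ring
  rw [hcong,
    integral_add
      (f := fun ω => Complex.I * ((S1 ω - ∫ ω', S1 ω' ∂μ) * star (e ω - ∫ ω', e ω' ∂μ))
        - Complex.I * ((S2 ω - ∫ ω', S2 ω' ∂μ) * star (e ω - ∫ ω', e ω' ∂μ)))
      (g := fun ω => Complex.I * ((S3 ω - ∫ ω', S3 ω' ∂μ) * star (e ω - ∫ ω', e ω' ∂μ)))
      (((ha1.const_mul _).sub (ha2.const_mul _))) (ha3.const_mul _),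
    integral_sub
      (f := fun ω => Complex.I * ((S1 ω - ∫ ω', S1 ω' ∂μ) * star (e ω - ∫ ω', e ω' ∂μ)))
      (g := fun ω => Complex.I * ((S2 ω - ∫ ω', S2 ω' ∂μ) * star (e ω - ∫ ω', e ω' ∂μ)))
      (ha1.const_mul _) (ha2.const_mul _),
    integral_const_mul, integral_const_mul, integral_const_mul]

end BKRHelpers

/-- Covariance bound for `H_t` under a BKR-decomposition. -/
theorem bkr_H_covariance_bound
    {Ω J : Type*} [MeasurableSpace Ω] [Fintype J]
    (μ : Measure Ω) [IsProbabilityMeasure μ]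
    (N : J → Finset J) (W : Ω → ℝ) (X Wj Z : J → Ω → ℝ)
    (Zjk Wjk Vjk : J → J → Ω → ℝ)
    (hW2 : MemLp W 2 μ) (hX2 : ∀ j, MemLp (X j) 2 μ)
    (hWj2 : ∀ j, MemLp (Wj j) 2 μ) (hZ2 : ∀ j, MemLp (Z j) 2 μ)
    (hZjk2 : ∀ j k, MemLp (Zjk j k) 2 μ)
    (hWjk2 : ∀ j k, MemLp (Wjk j k) 2 μ)
    (hVjk2 : ∀ j k, MemLp (Vjk j k) 2 μ)
    (hW : ∀ ω, W ω = ∑ j, X j ω)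
    (hXmean : ∀ j, ∫ ω, X j ω ∂μ = 0)
    (hWnorm : ∫ ω, (W ω) ^ 2 ∂μ = 1)
    (hdec1 : ∀ j ω, W ω = Wj j ω + Z j ω)
    (hZdef : ∀ j ω, Z j ω = ∑ k ∈ N j, Zjk j k ω)
    (hdec2 : ∀ j, ∀ k ∈ N j, ∀ ω, Wj j ω = Wjk j k ω + Vjk j k ω)
    (hindep1 : ∀ j, IndepFun (Wj j) (X j) μ)
    (hindep2 : ∀ j, ∀ k ∈ N j, IndepFun (Wjk j k) (fun ω => (X j ω, Zjk j k ω)) μ)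
    (hS1 : ∀ t : ℝ, MemLp (fun ω =>
      ∑ j, ((X j ω * (Z j ω) ^ 2 : ℝ) : ℂ) * R 2 (-(t * Z j ω))) 2 μ)
    (hS2 : ∀ t : ℝ, MemLp (fun ω => ∑ j, ∑ k ∈ N j,
      ((X j ω * Zjk j k ω : ℝ) : ℂ) * ((Z j ω + Vjk j k ω : ℝ) : ℂ)
        * R 1 (-(t * (Z j ω + Vjk j k ω)))) 2 μ)
    (hS3 : ∀ t : ℝ, MemLp (fun ω => ∑ j, ∑ k ∈ N j,
      ((∫ ω', X j ω' * Zjk j k ω' ∂μ : ℝ) : ℂ) * ((Z j ω + Vjk j k ω : ℝ) : ℂ)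
        * R 1 (-(t * (Z j ω + Vjk j k ω)))) 2 μ) :
    ∀ t : ℝ,
      ‖covC μ (bkrH μ N X Z Zjk Vjk t)
          (fun ω => Complex.exp (-(Complex.I * t * W ω)))‖ ≤
        Real.sqrt (varC μ (fun ω =>
            ∑ j, ((X j ω * (Z j ω) ^ 2 : ℝ) : ℂ) * R 2 (-(t * Z j ω))))
          + Real.sqrt (varC μ (fun ω => ∑ j, ∑ k ∈ N j,
              ((X j ω * Zjk j k ω : ℝ) : ℂ) * ((Z j ω + Vjk j k ω : ℝ) : ℂ)
                * R 1 (-(t * (Z j ω + Vjk j k ω)))))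
          + Real.sqrt (varC μ (fun ω => ∑ j, ∑ k ∈ N j,
              ((∫ ω', X j ω' * Zjk j k ω' ∂μ : ℝ) : ℂ) * ((Z j ω + Vjk j k ω : ℝ) : ℂ)
                * R 1 (-(t * (Z j ω + Vjk j k ω))))) := by
  intro t
  set e : Ω → ℂ := fun ω => Complex.exp (-(Complex.I * t * W ω)) with he_def
  set S1 : Ω → ℂ := fun ω =>
    ∑ j, ((X j ω * (Z j ω) ^ 2 : ℝ) : ℂ) * R 2 (-(t * Z j ω)) with hS1def
  set S2 : Ω → ℂ := fun ω => ∑ j, ∑ k ∈ N j,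
    ((X j ω * Zjk j k ω : ℝ) : ℂ) * ((Z j ω + Vjk j k ω : ℝ) : ℂ)
      * R 1 (-(t * (Z j ω + Vjk j k ω))) with hS2def
  set S3 : Ω → ℂ := fun ω => ∑ j, ∑ k ∈ N j,
    ((∫ ω', X j ω' * Zjk j k ω' ∂μ : ℝ) : ℂ) * ((Z j ω + Vjk j k ω : ℝ) : ℂ)
      * R 1 (-(t * (Z j ω + Vjk j k ω))) with hS3def
  have he : MemLp e 2 μ := bkr_memLp_exp hW2.aestronglyMeasurable t
  have hm1 : MemLp S1 2 μ := hS1 t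
  have hm2 : MemLp S2 2 μ := hS2 t
  have hm3 : MemLp S3 2 μ := hS3 t
  have hH : bkrH μ N X Z Zjk Vjk t
      = fun ω => Complex.I * S1 ω - Complex.I * S2 ω + Complex.I * S3 ω := by
    funext ω
    simp only [bkrH, hS1def, hS2def, hS3def]
    have hB : (∑ j, ∑ k ∈ N j,
        ((X j ω * Zjk j k ω - ∫ ω', X j ω' * Zjk j k ω' ∂μ : ℝ) : ℂ)
          * ((Z j ω + Vjk j k ω : ℝ) : ℂ) * R 1 (-(t * (Z j ω + Vjk j k ω))))
        = (∑ j, ∑ k ∈ N j,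
            ((X j ω * Zjk j k ω : ℝ) : ℂ) * ((Z j ω + Vjk j k ω : ℝ) : ℂ)
              * R 1 (-(t * (Z j ω + Vjk j k ω))))
          - ∑ j, ∑ k ∈ N j,
            ((∫ ω', X j ω' * Zjk j k ω' ∂μ : ℝ) : ℂ) * ((Z j ω + Vjk j k ω : ℝ) : ℂ)
              * R 1 (-(t * (Z j ω + Vjk j k ω))) := by
      rw [← Finset.sum_sub_distrib]
      refine Finset.sum_congr rfl fun j _ => ?_
      rw [← Finset.sum_sub_distrib]
      refine Finset.sum_congr rfl fun k _ => ?_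
      push_cast
      ring
    rw [hB]
    ring
  rw [hH, bkr_covC_combo S1 S2 S3 e hm1 hm2 hm3 he]
  have hvare : Real.sqrt (varC μ e) ≤ 1 := by
    calc Real.sqrt (varC μ e) ≤ Real.sqrt 1 :=
          Real.sqrt_le_sqrt (bkr_varC_exp_le_one hW2.aestronglyMeasurable t)
      _ = 1 := Real.sqrt_one
  have hb : ∀ (Si : Ω → ℂ), MemLp Si 2 μ →
      ‖covC μ Si e‖ ≤ Real.sqrt (varC μ Si) := by
    intro Si hSi
    calc ‖covC μ Si e‖ ≤ Real.sqrt (varC μ Si) * Real.sqrt (varC μ e) :=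
          bkr_abs_covC_le hSi he
      _ ≤ Real.sqrt (varC μ Si) * 1 :=
          mul_le_mul_of_nonneg_left hvare (Real.sqrt_nonneg _)
      _ = Real.sqrt (varC μ Si) := mul_one _
  calc ‖Complex.I * covC μ S1 e - Complex.I * covC μ S2 e
        + Complex.I * covC μ S3 e‖
      ≤ ‖Complex.I * covC μ S1 e - Complex.I * covC μ S2 e‖
        + ‖Complex.I * covC μ S3 e‖ := by
        exact norm_add_le _ _
    _ ≤ ‖Complex.I * covC μ S1 e‖ + ‖Complex.I * covC μ S2 e‖
        + ‖Complex.I * covC μ S3 e‖ := by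
        refine add_le_add ?_ le_rfl
        exact norm_sub_le _ _
    _ = ‖covC μ S1 e‖ + ‖covC μ S2 e‖ + ‖covC μ S3 e‖ := by
        simp [map_mul, Complex.norm_I]
    _ ≤ Real.sqrt (varC μ S1) + Real.sqrt (varC μ S2) + Real.sqrt (varC μ S3) :=
        add_le_add (add_le_add (hb S1 hm1) (hb S2 hm2)) (hb S3 hm3)
end

section
/- Let W be BKR-decomposable with corresponding H_t. Then H_0 is integrable if and only if W³ is integrable. More precisely, (1/2)W³ − W = i·H_0 + (1/2)∑_{j∈J} X_j W_j² + ∑_{j∈J}∑_{k∈N_j}(X_j Z_{jk} − E[X_j Z_{jk}])·W_{jk}, and the expectations of the last two sums exist by the independence assumptions. -/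
open MeasureTheory ProbabilityTheory

lemma R_zero (l : ℕ) : R l 0 = 1 / (l.factorial : ℂ) := by
  rw [R, tsum_eq_single 0]
  · simp
  · intro m hm
    simp [zero_pow hm]

lemma integrable_mul_L2 {Ω : Type*} [MeasurableSpace Ω] {μ : Measure Ω} {f g : Ω → ℝ}
    (hf : MemLp f 2 μ) (hg : MemLp g 2 μ) : Integrable (fun ω => f ω * g ω) μ := by
  refine Integrable.mono' ((hf.integrable_sq.add hg.integrable_sq).const_mul (1/2))
    (hf.aestronglyMeasurable.mul hg.aestronglyMeasurable) (Filter.Eventually.of_forall fun ω => ?_)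
  rw [Real.norm_eq_abs, abs_mul]
  simp only [Pi.add_apply]
  nlinarith [sq_nonneg (|f ω| - |g ω|), sq_abs (f ω), sq_abs (g ω), abs_nonneg (f ω),
    abs_nonneg (g ω)]

/-- For a BKR-decomposable `W`, `H_0` is integrable iff `W³` is; more precisely
`(1/2)W³ − W = i·H_0 + (1/2)∑_j X_j W_j² + ∑_j∑_{k∈N_j}(X_jZ_{jk} − E[X_jZ_{jk}])W_{jk}`. -/
theorem bkr_H0_integrable_iff_W3
    {Ω J : Type*} [MeasurableSpace Ω] [Fintype J]
    (μ : Measure Ω) [IsProbabilityMeasure μ]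
    (N : J → Finset J) (W : Ω → ℝ) (X Wj Z : J → Ω → ℝ)
    (Zjk Wjk Vjk : J → J → Ω → ℝ)
    (hW2 : MemLp W 2 μ) (hX2 : ∀ j, MemLp (X j) 2 μ)
    (hWj2 : ∀ j, MemLp (Wj j) 2 μ) (hZ2 : ∀ j, MemLp (Z j) 2 μ)
    (hZjk2 : ∀ j k, MemLp (Zjk j k) 2 μ)
    (hWjk2 : ∀ j k, MemLp (Wjk j k) 2 μ)
    (hVjk2 : ∀ j k, MemLp (Vjk j k) 2 μ)
    (hW : ∀ ω, W ω = ∑ j, X j ω)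
    (hXmean : ∀ j, ∫ ω, X j ω ∂μ = 0)
    (hWnorm : ∫ ω, (W ω) ^ 2 ∂μ = 1)
    (hdec1 : ∀ j ω, W ω = Wj j ω + Z j ω)
    (hZdef : ∀ j ω, Z j ω = ∑ k ∈ N j, Zjk j k ω)
    (hdec2 : ∀ j, ∀ k ∈ N j, ∀ ω, Wj j ω = Wjk j k ω + Vjk j k ω)
    (hindep1 : ∀ j, IndepFun (Wj j) (X j) μ)
    (hindep2 : ∀ j, ∀ k ∈ N j, IndepFun (Wjk j k) (fun ω => (X j ω, Zjk j k ω)) μ) :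
    (Integrable (bkrH μ N X Z Zjk Vjk 0) μ ↔ Integrable (fun ω => (W ω) ^ 3) μ) ∧
      ∀ ω, (((1 / 2) * (W ω) ^ 3 - W ω : ℝ) : ℂ) =
        Complex.I * bkrH μ N X Z Zjk Vjk 0 ω
          + (((1 / 2) * ∑ j, X j ω * (Wj j ω) ^ 2 : ℝ) : ℂ)
          + ((∑ j, ∑ k ∈ N j,
              (X j ω * Zjk j k ω - ∫ ω', X j ω' * Zjk j k ω' ∂μ) * Wjk j k ω : ℝ) : ℂ) := by
  have hR1 : R 1 0 = 1 := by rw [R_zero]; norm_num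
  have hR2 : R 2 0 = 1 / 2 := by rw [R_zero]; norm_num [Nat.factorial]
  have hXint : ∀ j, Integrable (X j) μ := fun j => (hX2 j).integrable one_le_two
  have hWint : Integrable W μ := hW2.integrable one_le_two
  have hXZjk : ∀ j k, Integrable (fun ω => X j ω * Zjk j k ω) μ :=
    fun j k => integrable_mul_L2 (hX2 j) (hZjk2 j k)
  have hXWj : ∀ j, Integrable (fun ω => X j ω * Wj j ω) μ :=
    fun j => integrable_mul_L2 (hX2 j) (hWj2 j)
  have hXZ : ∀ j, Integrable (fun ω => X j ω * Z j ω) μ :=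
    fun j => integrable_mul_L2 (hX2 j) (hZ2 j)
  -- the constant ∑_j ∑_k E[X_j Z_jk] equals 1
  have hintXW : ∀ j, ∫ ω, X j ω * Wj j ω ∂μ = 0 := by
    intro j
    have h : (fun ω => X j ω * Wj j ω) = fun ω => Wj j ω * X j ω :=
      funext fun ω => mul_comm _ _
    rw [h, (hindep1 j).integral_fun_mul_eq_mul_integral (hWj2 j).aestronglyMeasurable
      (hX2 j).aestronglyMeasurable, hXmean j, mul_zero]
  have hXZsplit : ∀ j, ∫ ω, X j ω * Z j ω ∂μ = ∑ k ∈ N j, ∫ ω', X j ω' * Zjk j k ω' ∂μ := by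
    intro j
    rw [show (fun ω => X j ω * Z j ω) = fun ω => ∑ k ∈ N j, X j ω * Zjk j k ω from
      funext fun ω => by rw [hZdef j ω, Finset.mul_sum]]
    exact integral_finset_sum _ fun k _ => hXZjk j k
  have hc : ∑ j, ∑ k ∈ N j, ∫ ω', X j ω' * Zjk j k ω' ∂μ = 1 := by
    have hfun : ∀ ω, (W ω) ^ 2 = ∑ j, (X j ω * Wj j ω + X j ω * Z j ω) := by
      intro ω
      calc (W ω) ^ 2 = (∑ j, X j ω) * W ω := by rw [← hW ω]; ring
        _ = ∑ j, X j ω * W ω := Finset.sum_mul _ _ _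
        _ = ∑ j, (X j ω * Wj j ω + X j ω * Z j ω) :=
            Finset.sum_congr rfl fun j _ => by rw [hdec1 j ω]; ring
    have h1 : ∫ ω, (W ω) ^ 2 ∂μ = ∑ j, ∫ ω, (X j ω * Wj j ω + X j ω * Z j ω) ∂μ := by
      simp_rw [hfun]
      exact integral_finset_sum _ fun j _ => (hXWj j).add (hXZ j)
    rw [← hWnorm, h1]
    refine Finset.sum_congr rfl fun j _ => ?_
    rw [integral_add (hXWj j) (hXZ j), hintXW j, zero_add, hXZsplit j]
  -- formula for H_0
  have hH : ∀ ω, bkrH μ N X Z Zjk Vjk 0 ω =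
      -Complex.I * ((∑ j, ∑ k ∈ N j,
          (X j ω * Zjk j k ω - ∫ ω', X j ω' * Zjk j k ω' ∂μ) * (Z j ω + Vjk j k ω)
        - (∑ j, X j ω * (Z j ω) ^ 2) * (1 / 2) : ℝ) : ℂ) := by
    intro ω
    rw [bkrH]
    simp only [zero_mul, neg_zero, hR1, hR2, mul_one]
    rw [← Finset.sum_mul]
    push_cast
    ring
  -- the key real identity
  have key : ∀ ω,
      (∑ j, ∑ k ∈ N j,
          (X j ω * Zjk j k ω - ∫ ω', X j ω' * Zjk j k ω' ∂μ) * (Z j ω + Vjk j k ω)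
        - (∑ j, X j ω * (Z j ω) ^ 2) * (1 / 2))
      + (1 / 2) * ∑ j, X j ω * (Wj j ω) ^ 2
      + ∑ j, ∑ k ∈ N j,
          (X j ω * Zjk j k ω - ∫ ω', X j ω' * Zjk j k ω' ∂μ) * Wjk j k ω
      = (1 / 2) * (W ω) ^ 3 - W ω := by
    intro ω
    have hdbl : ∀ j, (∑ k ∈ N j,
          (X j ω * Zjk j k ω - ∫ ω', X j ω' * Zjk j k ω' ∂μ) * (Z j ω + Vjk j k ω))
        + ∑ k ∈ N j,
          (X j ω * Zjk j k ω - ∫ ω', X j ω' * Zjk j k ω' ∂μ) * Wjk j k ω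
        = X j ω * Z j ω * W ω - (∑ k ∈ N j, ∫ ω', X j ω' * Zjk j k ω' ∂μ) * W ω := by
      intro j
      rw [← Finset.sum_add_distrib]
      have hterm : ∀ k ∈ N j,
          (X j ω * Zjk j k ω - ∫ ω', X j ω' * Zjk j k ω' ∂μ) * (Z j ω + Vjk j k ω)
          + (X j ω * Zjk j k ω - ∫ ω', X j ω' * Zjk j k ω' ∂μ) * Wjk j k ω
          = X j ω * Zjk j k ω * W ω - (∫ ω', X j ω' * Zjk j k ω' ∂μ) * W ω := by
        intro k hk
        have hw : Z j ω + Vjk j k ω + Wjk j k ω = W ω := by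
          rw [hdec1 j ω, hdec2 j k hk ω]; ring
        linear_combination (X j ω * Zjk j k ω - ∫ ω', X j ω' * Zjk j k ω' ∂μ) * hw
      rw [Finset.sum_congr rfl hterm, Finset.sum_sub_distrib, ← Finset.sum_mul,
        ← Finset.sum_mul, ← Finset.mul_sum, ← hZdef j ω]
    have e0 : ∑ j, ∑ k ∈ N j,
          (X j ω * Zjk j k ω - ∫ ω', X j ω' * Zjk j k ω' ∂μ) * (Z j ω + Vjk j k ω)
        + ∑ j, ∑ k ∈ N j,
          (X j ω * Zjk j k ω - ∫ ω', X j ω' * Zjk j k ω' ∂μ) * Wjk j k ω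
        = ∑ j, (X j ω * Z j ω * W ω
            - (∑ k ∈ N j, ∫ ω', X j ω' * Zjk j k ω' ∂μ) * W ω) := by
      rw [← Finset.sum_add_distrib]
      exact Finset.sum_congr rfl fun j _ => hdbl j
    have t1 : ∑ j, (X j ω * Z j ω * W ω
          - (∑ k ∈ N j, ∫ ω', X j ω' * Zjk j k ω' ∂μ) * W ω)
        = (∑ j, X j ω * Z j ω) * W ω - W ω := by
      rw [Finset.sum_sub_distrib, ← Finset.sum_mul, ← Finset.sum_mul, hc, one_mul]
    have hbody : ∀ j, X j ω * Z j ω * W ω + 1 / 2 * (X j ω * (Wj j ω) ^ 2)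
        - X j ω * (Z j ω) ^ 2 * (1 / 2) = 1 / 2 * X j ω * (W ω) ^ 2 := by
      intro j
      have h1 : Wj j ω = W ω - Z j ω := by linarith [hdec1 j ω]
      rw [h1]; ring
    have t2 : (∑ j, X j ω * Z j ω) * W ω + 1 / 2 * ∑ j, X j ω * (Wj j ω) ^ 2
        - (∑ j, X j ω * (Z j ω) ^ 2) * (1 / 2) = 1 / 2 * (W ω) ^ 3 := by
      rw [Finset.sum_mul (f := fun j => X j ω * Z j ω), Finset.mul_sum,
        Finset.sum_mul (f := fun j => X j ω * (Z j ω) ^ 2), ← Finset.sum_add_distrib,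
        ← Finset.sum_sub_distrib,
        Finset.sum_congr rfl fun j _ => hbody j]
      have t3 : ∑ j, 1 / 2 * X j ω * (W ω) ^ 2 = 1 / 2 * (∑ j, X j ω) * (W ω) ^ 2 := by
        rw [Finset.mul_sum, Finset.sum_mul]
      rw [t3, ← hW ω]; ring
    linarith [e0, t1, t2]
  have hA : Integrable (fun ω => ∑ j, X j ω * (Wj j ω) ^ 2) μ := by
    refine integrable_finset_sum _ fun j _ => ?_
    have hind : IndepFun (fun ω => (Wj j ω) ^ 2) (X j) μ :=
      (hindep1 j).comp (measurable_id.pow_const 2) measurable_id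
    have := hind.integrable_mul ((hWj2 j).integrable_sq) (hXint j)
    exact this.congr (Filter.Eventually.of_forall fun ω => mul_comm _ _)
  have hB : Integrable (fun ω => ∑ j, ∑ k ∈ N j,
      (X j ω * Zjk j k ω - ∫ ω', X j ω' * Zjk j k ω' ∂μ) * Wjk j k ω) μ := by
    refine integrable_finset_sum _ fun j _ => integrable_finset_sum _ fun k hk => ?_
    have hφ : Measurable (fun p : ℝ × ℝ => p.1 * p.2 - ∫ ω', X j ω' * Zjk j k ω' ∂μ) :=
      (measurable_fst.mul measurable_snd).sub measurable_const
    have hind : IndepFun (fun ω => X j ω * Zjk j k ω - ∫ ω', X j ω' * Zjk j k ω' ∂μ)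
        (Wjk j k) μ := ((hindep2 j k hk).comp measurable_id hφ).symm
    have hf : Integrable (fun ω => X j ω * Zjk j k ω - ∫ ω', X j ω' * Zjk j k ω' ∂μ) μ :=
      (hXZjk j k).sub (integrable_const _)
    exact hind.integrable_mul hf ((hWjk2 j k).integrable one_le_two)
  constructor
  · constructor
    · intro h
      have h1 : Integrable (fun ω => Complex.I * bkrH μ N X Z Zjk Vjk 0 ω) μ := h.const_mul _
      have h2 : Integrable (fun ω => ((∑ j, ∑ k ∈ N j,
          (X j ω * Zjk j k ω - ∫ ω', X j ω' * Zjk j k ω' ∂μ) * (Z j ω + Vjk j k ω)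
          - (∑ j, X j ω * (Z j ω) ^ 2) * (1 / 2) : ℝ) : ℂ)) μ := by
        refine h1.congr (Filter.Eventually.of_forall fun ω => ?_)
        simp only [hH]
        rw [← mul_assoc, mul_neg, Complex.I_mul_I, neg_neg, one_mul]
      have hD : Integrable (fun ω => ∑ j, ∑ k ∈ N j,
          (X j ω * Zjk j k ω - ∫ ω', X j ω' * Zjk j k ω' ∂μ) * (Z j ω + Vjk j k ω)
          - (∑ j, X j ω * (Z j ω) ^ 2) * (1 / 2)) μ := by
        exact h2.re.congr (Filter.Eventually.of_forall fun ω => RCLike.ofReal_re _)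
      refine Integrable.congr
        ((((hD.add (hA.const_mul (1 / 2))).add hB).add hWint).const_mul 2)
        (Filter.Eventually.of_forall fun ω => ?_)
      have hk := key ω
      simp only [Pi.add_apply, Pi.sub_apply]
      linarith
    · intro h
      have hD : Integrable (fun ω => ∑ j, ∑ k ∈ N j,
          (X j ω * Zjk j k ω - ∫ ω', X j ω' * Zjk j k ω' ∂μ) * (Z j ω + Vjk j k ω)
          - (∑ j, X j ω * (Z j ω) ^ 2) * (1 / 2)) μ := by
        refine Integrable.congr
          ((((h.const_mul (1 / 2)).sub hWint).sub (hA.const_mul (1 / 2))).sub hB)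
          (Filter.Eventually.of_forall fun ω => ?_)
        have hk := key ω
        simp only [Pi.add_apply, Pi.sub_apply]
        linarith
      exact ((hD.ofReal (𝕜 := ℂ)).const_mul (-Complex.I)).congr
        (Filter.Eventually.of_forall fun ω => (hH ω).symm)
  · intro ω
    rw [hH ω, ← mul_assoc, mul_neg, Complex.I_mul_I, neg_neg, one_mul,
      ← Complex.ofReal_add, ← Complex.ofReal_add]
    exact congrArg Complex.ofReal (key ω).symm
end

section
/- In the subgraph-counting setting, there is a constant C_𝒢 depending only on 𝒢 such that ∑_{j∈J} ∑_{k,l∈N_j} E[Y_j Y_k Y_l] ≤ C_𝒢 · Ψ_𝒢³ · (∑_{H⊆𝒢, e_H>0} Ψ_H^{−1})², where Ψ_H = n^{v_H} p^{e_H}. -/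
open MeasureTheory ProbabilityTheory

open scoped Classical in
/-- Number of vertices touched by a set of edges. -/
noncomputable def vsupp {α : Type*} [Fintype α] (h : Finset (Sym2 α)) : ℕ :=
  (Finset.univ.filter fun v : α => ∃ e ∈ h, v ∈ e).card

open scoped Classical in
/-- Set of vertices touched by a set of edges. -/
noncomputable def vfin {α : Type*} [Fintype α] (h : Finset (Sym2 α)) : Finset α :=
  Finset.univ.filter fun v : α => ∃ e ∈ h, v ∈ e

lemma mem_vfin {α : Type*} [Fintype α] {h : Finset (Sym2 α)} {v : α} :
    v ∈ vfin h ↔ ∃ e ∈ h, v ∈ e := by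
  simp [vfin]

lemma vsupp_eq_card_vfin {α : Type*} [Fintype α] (h : Finset (Sym2 α)) :
    vsupp h = (vfin h).card := rfl

section Aux

variable {α β γ : Type*}

lemma prod_boole01 {g : α → ℝ} (h01 : ∀ a, g a = 0 ∨ g a = 1) (s : Finset α) :
    ∏ a ∈ s, g a = if ∀ a ∈ s, g a = 1 then 1 else 0 := by
  classical
  induction s using Finset.induction_on with
  | empty => simp
  | @insert a s ha ih =>
    rw [Finset.prod_insert ha, ih]
    rcases h01 a with h | h <;> simp [h, Finset.forall_mem_insert]

lemma prod01_mul {g : α → ℝ} [DecidableEq α] (h01 : ∀ a, g a = 0 ∨ g a = 1)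
    (s t : Finset α) :
    (∏ a ∈ s, g a) * ∏ a ∈ t, g a = ∏ a ∈ s ∪ t, g a := by
  classical
  rw [prod_boole01 h01, prod_boole01 h01, prod_boole01 h01]
  by_cases hu : ∀ a ∈ s ∪ t, g a = 1
  · have hs : ∀ a ∈ s, g a = 1 := fun a ha => hu a (Finset.mem_union_left _ ha)
    have ht : ∀ a ∈ t, g a = 1 := fun a ha => hu a (Finset.mem_union_right _ ha)
    rw [if_pos hs, if_pos ht, if_pos hu]; norm_num
  · rw [if_neg hu]
    push_neg at hu
    obtain ⟨a, ha, hga⟩ := hu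
    rcases Finset.mem_union.1 ha with h | h
    · have hns : ¬ ∀ b ∈ s, g b = 1 := fun hc => hga (hc a h)
      rw [if_neg hns]; ring
    · have hnt : ¬ ∀ b ∈ t, g b = 1 := fun hc => hga (hc a h)
      rw [if_neg hnt]; ring

lemma sum_image_le' [DecidableEq β] {f : β → ℝ} (hf : ∀ y, 0 ≤ f y)
    (s : Finset α) (g : α → β) :
    ∑ y ∈ s.image g, f y ≤ ∑ x ∈ s, f (g x) := by
  classical
  rw [← Finset.sum_fiberwise_of_maps_to (fun x hx => Finset.mem_image_of_mem g hx)
    (fun x => f (g x))]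
  refine Finset.sum_le_sum fun y hy => ?_
  obtain ⟨x, hx, hxy⟩ := Finset.mem_image.1 hy
  have hxf : x ∈ s.filter fun x => g x = y := Finset.mem_filter.2 ⟨hx, hxy⟩
  calc f y = ∑ z ∈ {x}, f (g z) := by simp [hxy]
    _ ≤ ∑ z ∈ s.filter fun x => g x = y, f (g z) := by
        refine Finset.sum_le_sum_of_subset_of_nonneg ?_ fun _ _ _ => hf _
        simpa using hxf

lemma card_pi_le {nV n : ℕ} (S : Finset (Fin nV)) (W : Finset (Fin n)) :
    ((Finset.univ : Finset (Fin nV → Fin n)).filter fun g => ∀ i ∈ S, g i ∈ W).card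
      ≤ W.card ^ S.card * n ^ (nV - S.card) := by
  classical
  have hsub : ((Finset.univ : Finset (Fin nV → Fin n)).filter fun g => ∀ i ∈ S, g i ∈ W)
      ⊆ Fintype.piFinset (fun i => if i ∈ S then W else Finset.univ) := by
    intro g hg
    rw [Fintype.mem_piFinset]
    intro i
    by_cases hi : i ∈ S <;> simp [hi, (Finset.mem_filter.1 hg).2 i]
  calc _ ≤ (Fintype.piFinset (fun i => if i ∈ S then W else Finset.univ)).card :=
        Finset.card_le_card hsub
    _ = ∏ i, (if i ∈ S then W else Finset.univ).card := Fintype.card_piFinset _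
    _ = W.card ^ S.card * n ^ (nV - S.card) := by
        rw [← Finset.prod_filter_mul_prod_filter_not Finset.univ (· ∈ S)]
        have h1 : Finset.univ.filter (· ∈ S) = S := by ext i; simp
        have h2 : Finset.univ.filter (¬ · ∈ S) = Finset.univ \ S := by ext i; simp
        rw [h1, h2]
        have e1 : ∀ i ∈ S, (if i ∈ S then W else Finset.univ).card = W.card := by
          intro i hi; simp [hi]
        have e2 : ∀ i ∈ Finset.univ \ S, (if i ∈ S then W else Finset.univ).card = n := by
          intro i hi; simp [(Finset.mem_sdiff.1 hi).2]
        rw [Finset.prod_congr rfl e1, Finset.prod_congr rfl e2, Finset.prod_const,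
          Finset.prod_const, Finset.card_sdiff_of_subset (Finset.subset_univ S)]
        simp

end Aux
section Expect

variable {Ω : Type} [MeasurableSpace Ω] {μ : MeasureTheory.Measure Ω}

lemma integral_prod_indicator {n : ℕ} [IsProbabilityMeasure μ]
    {I : Sym2 (Fin n) → Ω → ℝ} {p : ℝ}
    (hmeas : ∀ m, Measurable (I m))
    (hindep : iIndepFun I μ)
    (h01 : ∀ m ω, I m ω = 0 ∨ I m ω = 1)
    (hmean : ∀ m, ∫ ω, I m ω ∂μ = p)
    (u : Finset (Sym2 (Fin n))) :
    ∫ ω, ∏ a ∈ u, I a ω ∂μ = p ^ u.card := by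
  classical
  induction u using Finset.induction_on with
  | empty => simp
  | @insert a u ha ih =>
    have hIndep : IndepFun (I a) (∏ b ∈ u, I b) μ :=
      (hindep.indepFun_finsetProd_of_notMem hmeas ha).symm
    have h1 : 0 ≤ I a := fun ω => by rcases h01 a ω with h | h <;> simp [h]
    have h2 : (0 : Ω → ℝ) ≤ ∏ b ∈ u, I b := fun ω => by
      rw [Finset.prod_apply]
      exact Finset.prod_nonneg fun b _ => by rcases h01 b ω with h | h <;> simp [h]
    have heq2' : (fun ω => ∏ b ∈ u, I b ω) = ∏ b ∈ u, I b := by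
      funext ω; rw [Finset.prod_apply]
    have hm2 : Measurable (∏ b ∈ u, I b) := by
      rw [← heq2']
      exact Finset.measurable_prod u fun b _ => hmeas b
    have key := hIndep.integral_mul_eq_mul_integral (hmeas a).aestronglyMeasurable hm2.aestronglyMeasurable
    have heq : (fun ω => ∏ b ∈ insert a u, I b ω) = I a * ∏ b ∈ u, I b := by
      funext ω
      rw [Finset.prod_insert ha, Pi.mul_apply, Finset.prod_apply]
    calc ∫ ω, ∏ b ∈ insert a u, I b ω ∂μ = ∫ ω, (I a * ∏ b ∈ u, I b) ω ∂μ := by rw [heq]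
      _ = (∫ ω, I a ω ∂μ) * ∫ ω, (∏ b ∈ u, I b) ω ∂μ := key
      _ = p * p ^ u.card := by
          rw [hmean a, ← ih, ← heq2']
      _ = p ^ (insert a u).card := by rw [Finset.card_insert_of_notMem ha, pow_succ]; ring

end Expect
section Key

lemma key_sum {nV n : ℕ} (G : SimpleGraph (Fin nV)) [DecidableRel G.Adj] [Fintype G.edgeSet]
    (hnV : 0 < nV) (hn : 0 < n) {p : ℝ} (hp : 0 < p)
    (J : Finset (Finset (Sym2 (Fin n))))
    (hJ : ∀ j, j ∈ J ↔ ∃ f : Fin nV ↪ Fin n, j = G.edgeFinset.image (Sym2.map ⇑f))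
    {j j' : Finset (Sym2 (Fin n))} (hjj' : j ⊆ j') (hW : (vfin j').card ≤ 2 * nV) :
    ∑ l ∈ J.filter (fun l => (j ∩ l).Nonempty),
        p ^ (G.edgeFinset.card - (l ∩ j').card)
      ≤ (2 * (nV : ℝ)) ^ nV * ((n : ℝ) ^ nV * p ^ G.edgeFinset.card) *
        ∑ h ∈ G.edgeFinset.powerset.filter Finset.Nonempty,
          ((n : ℝ) ^ vsupp h * p ^ h.card)⁻¹ := by
  classical
  set E := G.edgeFinset with hE
  set e := E.card with he
  set g : (Fin nV ↪ Fin n) → Finset (Sym2 (Fin n)) := fun f => E.image (Sym2.map ⇑f) with hg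
  set Femb : Finset (Fin nV ↪ Fin n) := Finset.univ.filter (fun f => (j ∩ g f).Nonempty)
    with hFemb
  set Hm : (Fin nV ↪ Fin n) → Finset (Sym2 (Fin nV)) :=
    fun f => E.filter (fun a => Sym2.map ⇑f a ∈ j') with hHm
  have hsubset : J.filter (fun l => (j ∩ l).Nonempty) ⊆ Femb.image g := by
    intro l hl
    obtain ⟨hlJ, hlne⟩ := Finset.mem_filter.1 hl
    obtain ⟨f, rfl⟩ := (hJ l).1 hlJ
    exact Finset.mem_image.2 ⟨f, Finset.mem_filter.2 ⟨Finset.mem_univ f, hlne⟩, rfl⟩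
  have hterm_nonneg : ∀ l : Finset (Sym2 (Fin n)), 0 ≤ p ^ (e - (l ∩ j').card) :=
    fun l => pow_nonneg hp.le _
  have hcard : ∀ f : Fin nV ↪ Fin n, (g f ∩ j').card = (Hm f).card := by
    intro f
    have himg : g f ∩ j' = (Hm f).image (Sym2.map ⇑f) := by
      ext x
      simp only [hg, hHm, Finset.mem_inter, Finset.mem_image, Finset.mem_filter]
      constructor
      · rintro ⟨⟨a, ha, rfl⟩, hx⟩; exact ⟨a, ⟨ha, hx⟩, rfl⟩
      · rintro ⟨a, ⟨ha, hx⟩, rfl⟩; exact ⟨⟨a, ha, rfl⟩, hx⟩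
    rw [himg, Finset.card_image_of_injective _ (Sym2.map.injective f.injective)]
  have hfiber : ∀ H ∈ E.powerset.filter Finset.Nonempty,
      ((Femb.filter (fun f => Hm f = H)).card : ℝ) * p ^ (e - H.card)
        ≤ (2 * (nV : ℝ)) ^ nV * ((n : ℝ) ^ nV * p ^ e) *
          ((n : ℝ) ^ vsupp H * p ^ H.card)⁻¹ := by
    intro H hH
    obtain ⟨hHsub, _⟩ := Finset.mem_filter.1 hH
    have hHE : H ⊆ E := Finset.mem_powerset.1 hHsub
    have hHcard : H.card ≤ e := Finset.card_le_card hHE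
    have hv : (vfin H).card ≤ nV := by
      calc (vfin H).card ≤ (Finset.univ : Finset (Fin nV)).card :=
            Finset.card_le_card (Finset.subset_univ _)
        _ = nV := by simp
    have hcount : (Femb.filter (fun f => Hm f = H)).card
        ≤ (vfin j').card ^ (vfin H).card * n ^ (nV - (vfin H).card) := by
      refine le_trans (Finset.card_le_card_of_injOn (fun f => ⇑f) ?_ ?_) (card_pi_le _ _)
      · intro f hf
        obtain ⟨_, hfH⟩ := Finset.mem_filter.1 hf
        refine Finset.mem_filter.2 ⟨Finset.mem_univ _, ?_⟩
        intro i hi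
        obtain ⟨a, haH, hia⟩ := mem_vfin.1 hi
        have haHm : a ∈ Hm f := by rw [hfH]; exact haH
        have hmap : Sym2.map ⇑f a ∈ j' := (Finset.mem_filter.1 haHm).2
        have hfi : f i ∈ Sym2.map ⇑f a := Sym2.mem_map.2 ⟨i, hia, rfl⟩
        exact mem_vfin.2 ⟨Sym2.map ⇑f a, hmap, hfi⟩
      · exact fun f _ f' _ hff => DFunLike.coe_injective hff
    have hWn : ((vfin j').card : ℝ) ^ (vfin H).card ≤ (2 * (nV : ℝ)) ^ nV := by
      calc ((vfin j').card : ℝ) ^ (vfin H).card ≤ (2 * (nV : ℝ)) ^ (vfin H).card := by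
            apply pow_le_pow_left₀ (by positivity)
            calc ((vfin j').card : ℝ) ≤ ((2 * nV : ℕ) : ℝ) := by exact_mod_cast hW
              _ = 2 * (nV : ℝ) := by push_cast; ring
        _ ≤ (2 * (nV : ℝ)) ^ nV := by
            apply pow_le_pow_right₀ ?_ hv
            have h1 : (1 : ℝ) ≤ nV := by exact_mod_cast hnV
            linarith
    have hpow : ((n : ℝ)) ^ (nV - (vfin H).card) * p ^ (e - H.card)
        = ((n : ℝ) ^ nV * p ^ e) * ((n : ℝ) ^ (vfin H).card * p ^ H.card)⁻¹ := by
      rw [pow_sub₀ (n : ℝ) (by exact_mod_cast hn.ne') hv, pow_sub₀ p hp.ne' hHcard, mul_inv]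
      ring
    calc ((Femb.filter (fun f => Hm f = H)).card : ℝ) * p ^ (e - H.card)
        ≤ (((vfin j').card : ℝ) ^ (vfin H).card * (n : ℝ) ^ (nV - (vfin H).card))
            * p ^ (e - H.card) := by
          apply mul_le_mul_of_nonneg_right ?_ (pow_nonneg hp.le _)
          calc ((Femb.filter (fun f => Hm f = H)).card : ℝ)
              ≤ (((vfin j').card ^ (vfin H).card * n ^ (nV - (vfin H).card) : ℕ) : ℝ) := by
                exact_mod_cast hcount
            _ = _ := by push_cast; ring
      _ = ((vfin j').card : ℝ) ^ (vfin H).card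
            * ((n : ℝ) ^ (nV - (vfin H).card) * p ^ (e - H.card)) := by ring
      _ ≤ (2 * (nV : ℝ)) ^ nV * ((n : ℝ) ^ (nV - (vfin H).card) * p ^ (e - H.card)) := by
          apply mul_le_mul_of_nonneg_right hWn (by positivity)
      _ = (2 * (nV : ℝ)) ^ nV * ((n : ℝ) ^ nV * p ^ e)
            * ((n : ℝ) ^ (vfin H).card * p ^ H.card)⁻¹ := by rw [hpow]; ring
      _ = _ := by rw [vsupp_eq_card_vfin]
  calc ∑ l ∈ J.filter (fun l => (j ∩ l).Nonempty), p ^ (e - (l ∩ j').card)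
      ≤ ∑ l ∈ Femb.image g, p ^ (e - (l ∩ j').card) :=
        Finset.sum_le_sum_of_subset_of_nonneg hsubset (fun l _ _ => hterm_nonneg l)
    _ ≤ ∑ f ∈ Femb, p ^ (e - (g f ∩ j').card) := sum_image_le' hterm_nonneg Femb g
    _ = ∑ f ∈ Femb, p ^ (e - (Hm f).card) :=
        Finset.sum_congr rfl fun f _ => by rw [hcard f]
    _ = ∑ H ∈ E.powerset, ∑ f ∈ Femb.filter (fun f => Hm f = H), p ^ (e - (Hm f).card) :=
        (Finset.sum_fiberwise_of_maps_to
          (fun f _ => Finset.mem_powerset.2 (Finset.filter_subset _ _)) _).symm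
    _ = ∑ H ∈ E.powerset, ((Femb.filter (fun f => Hm f = H)).card : ℝ) * p ^ (e - H.card) := by
        refine Finset.sum_congr rfl fun H _ => ?_
        rw [Finset.sum_congr rfl (fun f hf => by rw [(Finset.mem_filter.1 hf).2]),
          Finset.sum_const, nsmul_eq_mul]
    _ = ∑ H ∈ E.powerset.filter Finset.Nonempty,
          ((Femb.filter (fun f => Hm f = H)).card : ℝ) * p ^ (e - H.card) := by
        refine (Finset.sum_filter_of_ne ?_).symm
        intro H hHp hne
        rw [Finset.nonempty_iff_ne_empty]
        rintro rfl
        apply hne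
        have hempty : Femb.filter (fun f => Hm f = (∅ : Finset (Sym2 (Fin nV)))) = ∅ := by
          rw [Finset.filter_eq_empty_iff]
          intro f hf
          obtain ⟨-, hne'⟩ := Finset.mem_filter.1 hf
          obtain ⟨x, hx⟩ := hne'
          obtain ⟨hxj, hxg⟩ := Finset.mem_inter.1 hx
          have hx' : x ∈ g f ∩ j' := Finset.mem_inter.2 ⟨hxg, hjj' hxj⟩
          intro hHm0
          have hc := hcard f
          rw [hHm0, Finset.card_empty] at hc
          have := Finset.card_pos.2 ⟨x, hx'⟩
          omega
        rw [hempty, Finset.card_empty]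
        push_cast; ring
    _ ≤ ∑ H ∈ E.powerset.filter Finset.Nonempty,
          (2 * (nV : ℝ)) ^ nV * ((n : ℝ) ^ nV * p ^ e)
            * ((n : ℝ) ^ vsupp H * p ^ H.card)⁻¹ := Finset.sum_le_sum hfiber
    _ = _ := by rw [← Finset.mul_sum]

end Key
/-- Subgraph counting: there is a constant `C_𝒢` such that
`∑_{j∈J}∑_{k,l∈N_j} E[Y_jY_kY_l] ≤ C_𝒢·Ψ_𝒢³·(∑_{H⊆𝒢, e_H>0} Ψ_H⁻¹)²`,
where `Ψ_H = n^{v_H} p^{e_H}`. -/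
theorem triple_copy_expectation_bound
    {nV : ℕ} (G : SimpleGraph (Fin nV)) [DecidableRel G.Adj] [Fintype G.edgeSet]
    (hnoiso : ∀ v : Fin nV, ∃ w, G.Adj v w)
    (hedge : 0 < G.edgeFinset.card) :
    ∃ C : ℝ, 0 < C ∧
      ∀ (n : ℕ) (p : ℝ), 0 ≤ p → p ≤ 1 →
      ∀ (Ω : Type) (_ : MeasurableSpace Ω) (μ : Measure Ω) (_ : IsProbabilityMeasure μ)
        (I : Sym2 (Fin n) → Ω → ℝ),
        (∀ m, Measurable (I m)) →
        iIndepFun I μ →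
        (∀ m ω, I m ω = 0 ∨ I m ω = 1) →
        (∀ m, ∫ ω, I m ω ∂μ = p) →
        ∀ J : Finset (Finset (Sym2 (Fin n))),
        (∀ j, j ∈ J ↔ ∃ f : Fin nV ↪ Fin n, j = G.edgeFinset.image (Sym2.map ⇑f)) →
        ∑ j ∈ J, ∑ k ∈ J.filter (fun k => (j ∩ k).Nonempty),
            ∑ l ∈ J.filter (fun l => (j ∩ l).Nonempty),
              ∫ ω, (∏ a ∈ j, I a ω) * (∏ a ∈ k, I a ω) * ∏ a ∈ l, I a ω ∂μ ≤
          C * ((n : ℝ) ^ nV * p ^ G.edgeFinset.card) ^ 3 *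
            (∑ h ∈ G.edgeFinset.powerset.filter Finset.Nonempty,
              ((n : ℝ) ^ vsupp h * p ^ h.card)⁻¹) ^ 2 := by
  classical
  have hnV : 0 < nV := by
    obtain ⟨a, _⟩ := Finset.card_pos.1 hedge
    induction a using Sym2.ind with
    | _ x y => exact lt_of_le_of_lt (Nat.zero_le _) x.isLt
  have hC : (0 : ℝ) < ((2 * (nV : ℝ)) ^ nV) ^ 2 := by
    have h1 : (0 : ℝ) < (nV : ℝ) := by exact_mod_cast hnV
    positivity
  refine ⟨((2 * (nV : ℝ)) ^ nV) ^ 2, hC, ?_⟩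
  intro n p hp0 hp1 Ω mΩ μ hμ I hmeas hindep h01 hmean J hJ
  have hint : ∀ j k l : Finset (Sym2 (Fin n)),
      ∫ ω, (∏ a ∈ j, I a ω) * (∏ a ∈ k, I a ω) * ∏ a ∈ l, I a ω ∂μ
        = p ^ (j ∪ k ∪ l).card := by
    intro j k l
    have h1 : (fun ω => (∏ a ∈ j, I a ω) * (∏ a ∈ k, I a ω) * ∏ a ∈ l, I a ω)
        = fun ω => ∏ a ∈ j ∪ k ∪ l, I a ω := by
      funext ω
      rw [prod01_mul (fun a => h01 a ω), prod01_mul (fun a => h01 a ω)]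
    calc ∫ ω, (∏ a ∈ j, I a ω) * (∏ a ∈ k, I a ω) * ∏ a ∈ l, I a ω ∂μ
        = ∫ ω, ∏ a ∈ j ∪ k ∪ l, I a ω ∂μ := by rw [h1]
      _ = p ^ (j ∪ k ∪ l).card := integral_prod_indicator hmeas hindep h01 hmean _
  simp only [hint]
  by_cases hp : p = 0
  · subst hp
    have hLHS : ∑ j ∈ J, ∑ k ∈ J.filter (fun k => (j ∩ k).Nonempty),
        ∑ l ∈ J.filter (fun l => (j ∩ l).Nonempty), (0 : ℝ) ^ (j ∪ k ∪ l).card = 0 := by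
      refine Finset.sum_eq_zero fun j hj => Finset.sum_eq_zero fun k _ =>
        Finset.sum_eq_zero fun l _ => ?_
      obtain ⟨f, rfl⟩ := (hJ j).1 hj
      obtain ⟨x, hx⟩ := (Finset.card_pos.1 hedge).image (Sym2.map ⇑f)
      have : 0 < (G.edgeFinset.image (Sym2.map ⇑f) ∪ k ∪ l).card :=
        Finset.card_pos.2 ⟨x, Finset.mem_union_left _ (Finset.mem_union_left _ hx)⟩
      exact zero_pow this.ne'
    rw [hLHS, zero_pow hedge.ne']
    simp
  have hp' : 0 < p := lt_of_le_of_ne hp0 (Ne.symm hp)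
  by_cases hn : n = 0
  · subst hn
    have hJempty : J = ∅ := by
      rw [Finset.eq_empty_iff_forall_notMem]
      intro j hj
      obtain ⟨f, -⟩ := (hJ j).1 hj
      exact (f ⟨0, hnV⟩).elim0
    rw [hJempty]
    simp [zero_pow hnV.ne']
  have hn' : 0 < n := Nat.pos_of_ne_zero hn
  set S : ℝ := ∑ h ∈ G.edgeFinset.powerset.filter Finset.Nonempty,
    ((n : ℝ) ^ vsupp h * p ^ h.card)⁻¹ with hSdef
  set B : ℝ := (2 * (nV : ℝ)) ^ nV * ((n : ℝ) ^ nV * p ^ G.edgeFinset.card) * S with hBdef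
  have hS0 : 0 ≤ S := Finset.sum_nonneg fun h _ => inv_nonneg.2 (by positivity)
  have hB0 : 0 ≤ B := by
    refine mul_nonneg (mul_nonneg (by positivity) (by positivity)) hS0
  have hcardJ : ∀ j ∈ J, j.card = G.edgeFinset.card := by
    intro j hj
    obtain ⟨f, rfl⟩ := (hJ j).1 hj
    exact Finset.card_image_of_injective _ (Sym2.map.injective f.injective)
  have hsuppJ : ∀ j ∈ J, (vfin j).card ≤ nV := by
    intro j hj
    obtain ⟨f, rfl⟩ := (hJ j).1 hj
    have hsub : vfin (G.edgeFinset.image (Sym2.map ⇑f)) ⊆ Finset.univ.image ⇑f := by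
      intro v hv
      obtain ⟨e', he', hve⟩ := mem_vfin.1 hv
      obtain ⟨a, _, rfl⟩ := Finset.mem_image.1 he'
      obtain ⟨i, _, rfl⟩ := Sym2.mem_map.1 hve
      exact Finset.mem_image.2 ⟨i, Finset.mem_univ i, rfl⟩
    calc (vfin (G.edgeFinset.image (Sym2.map ⇑f))).card
        ≤ (Finset.univ.image ⇑f).card := Finset.card_le_card hsub
      _ ≤ (Finset.univ : Finset (Fin nV)).card := Finset.card_image_le
      _ = nV := by simp
  have hsupp2 : ∀ j ∈ J, ∀ k ∈ J, (vfin (j ∪ k)).card ≤ 2 * nV := by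
    intro j hj k hk
    have hsub : vfin (j ∪ k) ⊆ vfin j ∪ vfin k := by
      intro v hv
      obtain ⟨e', he', hve⟩ := mem_vfin.1 hv
      rcases Finset.mem_union.1 he' with h | h
      · exact Finset.mem_union_left _ (mem_vfin.2 ⟨e', h, hve⟩)
      · exact Finset.mem_union_right _ (mem_vfin.2 ⟨e', h, hve⟩)
    calc (vfin (j ∪ k)).card ≤ (vfin j ∪ vfin k).card := Finset.card_le_card hsub
      _ ≤ (vfin j).card + (vfin k).card := Finset.card_union_le _ _
      _ ≤ nV + nV := add_le_add (hsuppJ j hj) (hsuppJ k hk)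
      _ = 2 * nV := (two_mul nV).symm
  have hJcard : (J.card : ℝ) ≤ (n : ℝ) ^ nV := by
    have hsubJ : J ⊆ Finset.image
        (fun f : Fin nV ↪ Fin n => G.edgeFinset.image (Sym2.map ⇑f)) Finset.univ := by
      intro j hj
      obtain ⟨f, rfl⟩ := (hJ j).1 hj
      exact Finset.mem_image.2 ⟨f, Finset.mem_univ f, rfl⟩
    have hnat : J.card ≤ n ^ nV := by
      calc J.card ≤ (Finset.image
            (fun f : Fin nV ↪ Fin n => G.edgeFinset.image (Sym2.map ⇑f)) Finset.univ).card :=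
            Finset.card_le_card hsubJ
        _ ≤ (Finset.univ : Finset (Fin nV ↪ Fin n)).card := Finset.card_image_le
        _ = Fintype.card (Fin nV ↪ Fin n) := Finset.card_univ
        _ = (Fintype.card (Fin n)).descFactorial (Fintype.card (Fin nV)) :=
            Fintype.card_embedding_eq
        _ = n.descFactorial nV := by simp
        _ ≤ n ^ nV := Nat.descFactorial_le_pow _ _
    exact_mod_cast hnat
  have hunion_card : ∀ s t : Finset (Sym2 (Fin n)), (s ∪ t).card = s.card + (t \ s).card := by
    intro s t
    rw [← Finset.union_sdiff_self_eq_union, Finset.card_union_of_disjoint Finset.disjoint_sdiff]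
  have hsdiff : ∀ l ∈ J, ∀ t : Finset (Sym2 (Fin n)),
      (l \ t).card = G.edgeFinset.card - (l ∩ t).card := by
    intro l hl t
    rw [← Finset.sdiff_inter_self_left l t, Finset.card_sdiff_of_subset Finset.inter_subset_left,
      hcardJ l hl]
  have hstep1 : ∀ j ∈ J, ∀ k ∈ J.filter (fun k => (j ∩ k).Nonempty),
      ∑ l ∈ J.filter (fun l => (j ∩ l).Nonempty), p ^ (j ∪ k ∪ l).card
        ≤ p ^ (j ∪ k).card * B := by
    intro j hj k hk
    have hkJ : k ∈ J := (Finset.mem_filter.1 hk).1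
    have heq : ∀ l ∈ J.filter (fun l => (j ∩ l).Nonempty),
        p ^ (j ∪ k ∪ l).card = p ^ (j ∪ k).card * p ^ (G.edgeFinset.card - (l ∩ (j ∪ k)).card) := by
      intro l hl
      have hlJ : l ∈ J := (Finset.mem_filter.1 hl).1
      rw [hunion_card (j ∪ k) l, pow_add, hsdiff l hlJ (j ∪ k)]
    rw [Finset.sum_congr rfl heq, ← Finset.mul_sum]
    exact mul_le_mul_of_nonneg_left
      (key_sum G hnV hn' hp' J hJ Finset.subset_union_left (hsupp2 j hj k hkJ))
      (pow_nonneg hp0 _)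
  have hstep2 : ∀ j ∈ J,
      ∑ k ∈ J.filter (fun k => (j ∩ k).Nonempty), p ^ (j ∪ k).card * B
        ≤ p ^ G.edgeFinset.card * (B * B) := by
    intro j hj
    have heq : ∀ k ∈ J.filter (fun k => (j ∩ k).Nonempty),
        p ^ (j ∪ k).card * B
          = p ^ G.edgeFinset.card * (p ^ (G.edgeFinset.card - (k ∩ j).card) * B) := by
      intro k hk
      have hkJ : k ∈ J := (Finset.mem_filter.1 hk).1
      rw [hunion_card j k, pow_add, hsdiff k hkJ j, hcardJ j hj]
      ring
    rw [Finset.sum_congr rfl heq, ← Finset.mul_sum]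
    apply mul_le_mul_of_nonneg_left ?_ (pow_nonneg hp0 _)
    rw [← Finset.sum_mul]
    refine mul_le_mul_of_nonneg_right ?_ hB0
    exact key_sum G hnV hn' hp' J hJ (subset_refl j) (le_trans (hsuppJ j hj) (by omega))
  calc ∑ j ∈ J, ∑ k ∈ J.filter (fun k => (j ∩ k).Nonempty),
        ∑ l ∈ J.filter (fun l => (j ∩ l).Nonempty), p ^ (j ∪ k ∪ l).card
      ≤ ∑ j ∈ J, p ^ G.edgeFinset.card * (B * B) := by
        refine Finset.sum_le_sum fun j hj => ?_
        refine le_trans (Finset.sum_le_sum fun k hk => hstep1 j hj k hk) (hstep2 j hj)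
    _ = (J.card : ℝ) * (p ^ G.edgeFinset.card * (B * B)) := by
        rw [Finset.sum_const, nsmul_eq_mul]
    _ ≤ (n : ℝ) ^ nV * (p ^ G.edgeFinset.card * (B * B)) := by
        refine mul_le_mul_of_nonneg_right hJcard ?_
        exact mul_nonneg (pow_nonneg hp0 _) (mul_nonneg hB0 hB0)
    _ = ((2 * (nV : ℝ)) ^ nV) ^ 2 * ((n : ℝ) ^ nV * p ^ G.edgeFinset.card) ^ 3 * S ^ 2 := by
        rw [hBdef]; ring
end
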